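/- arXiv:1405.3819 — 13 statements merged into one kernel-verified Lean document; each statement's English description precedes it below -/
import Mathlib

section
/- Let M be a module over a ring R with a direct sum decomposition M = D ⊕ D', and let A and B be submodules of D. Then A β* B as submodules of M if and only if A β* B as submodules of D. -/
section Aux
variable {R N M : Type*} [Ring R] [AddCommGroup N] [Module R N]
  [AddCommGroup M] [Module R M]

theorem isSmallSub_map_iff' (f : N →ₗ[R] M) (hf : Function.Injective f)
    (C : Submodule R M) (hc : IsCompl (LinearMap.range f) C)
    (K : Submodule R N) :
    (∀ L : Submodule R M, (K.map f) ⊔ L = ⊤ → L = ⊤) ↔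
      (∀ L : Submodule R N, K ⊔ L = ⊤ → L = ⊤) := by
  constructor
  · intro h L hL
    have h1 : K.map f ⊔ (L.map f ⊔ C) = ⊤ := by
      rw [← sup_assoc, ← Submodule.map_sup, hL, Submodule.map_top, hc.sup_eq_top]
    have h2 := h _ h1
    ext n
    simp only [Submodule.mem_top, iff_true]
    have : f n ∈ L.map f ⊔ C := h2 ▸ Submodule.mem_top
    obtain ⟨x, hx, c, hcC, hxc⟩ := Submodule.mem_sup.1 this
    obtain ⟨l, hl, rfl⟩ := hx
    have hcr : c ∈ LinearMap.range f ⊓ C := by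
      refine ⟨⟨n - l, ?_⟩, hcC⟩
      rw [map_sub, ← hxc]; abel
    rw [hc.inf_eq_bot] at hcr
    have : f n = f l := by rw [← hxc, hcr]; abel
    exact hf this ▸ hl
  · intro h L hL
    set L₀ : Submodule R N := (LinearMap.range f ⊓ L).comap f with hL₀
    have hKL₀ : K ⊔ L₀ = ⊤ := by
      ext n
      simp only [Submodule.mem_top, iff_true]
      have : f n ∈ K.map f ⊔ L := hL ▸ Submodule.mem_top
      obtain ⟨x, hx, y, hyL, hxy⟩ := Submodule.mem_sup.1 this
      obtain ⟨k, hk, rfl⟩ := hx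
      have hy : y ∈ LinearMap.range f ⊓ L := ⟨⟨n - k, by rw [map_sub, ← hxy]; abel⟩, hyL⟩
      obtain ⟨⟨m, hm⟩, hyL'⟩ := hy
      have hnm : n = k + m := hf (by rw [map_add, hm, ← hxy])
      exact hnm ▸ Submodule.add_mem_sup hk
        (Submodule.mem_comap.2 ⟨⟨m, rfl⟩, hm ▸ hyL'⟩)
    have hL₀top := h _ hKL₀
    have hrange : LinearMap.range f ≤ L := by
      rintro _ ⟨n, rfl⟩
      have : n ∈ L₀ := hL₀top ▸ Submodule.mem_top
      exact this.2
    have : (⊤ : Submodule R M) ≤ L := by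
      rw [← hL]
      exact sup_le ((Submodule.map_le_iff_le_comap.2 (fun k hk => hrange ⟨k, rfl⟩))) le_rfl
    exact top_le_iff.1 this

end Aux

section Key
variable {R M : Type*} [Ring R] [AddCommGroup M] [Module R M]

theorem compl_map_mkQ (D D' : Submodule R M) (hDD' : IsCompl D D')
    (A : Submodule R M) (hA : A ≤ D) :
    IsCompl (D.map A.mkQ) (D'.map A.mkQ) := by
  apply IsCompl.of_eq
  · rw [eq_bot_iff]
    rintro x ⟨⟨d, hd, rfl⟩, ⟨d', hd', heq⟩⟩
    have : d' - d ∈ A := by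
      rwa [Submodule.mkQ_apply, Submodule.mkQ_apply, Submodule.Quotient.eq] at heq
    have hd'D : d' ∈ D := by
      have := add_mem (hA this) hd
      simpa using this
    have : d' ∈ D ⊓ D' := ⟨hd'D, hd'⟩
    rw [hDD'.inf_eq_bot] at this
    simp only [Submodule.mem_bot] at this
    simp only [Submodule.mem_bot, ← heq, this]
    simp
  · rw [← Submodule.map_sup, hDD'.sup_eq_top, Submodule.map_top, Submodule.range_mkQ]

theorem key (D D' : Submodule R M) (hDD' : IsCompl D D')
    (A : Submodule R M) (hA : A ≤ D) (S : Submodule R D) :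
    (∀ L : Submodule R (M ⧸ A), ((S.map D.subtype).map A.mkQ) ⊔ L = ⊤ → L = ⊤) ↔
    (∀ L : Submodule R (D ⧸ A.comap D.subtype),
      (S.map (A.comap D.subtype).mkQ) ⊔ L = ⊤ → L = ⊤) := by
  set A' := A.comap D.subtype with hA'
  set f : D →ₗ[R] M ⧸ A := A.mkQ.comp D.subtype with hf
  have hker : LinearMap.ker f = A' := by
    rw [hf, LinearMap.ker_comp, Submodule.ker_mkQ]
  set g : (D ⧸ A') →ₗ[R] M ⧸ A := A'.liftQ f hker.ge with hg
  have hginj : Function.Injective g := by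
    rw [← LinearMap.ker_eq_bot, hg, Submodule.ker_liftQ_eq_bot _ _ _ hker.le]
  have hrange : LinearMap.range g = D.map A.mkQ := by
    rw [hg, Submodule.range_liftQ, hf, LinearMap.range_comp, Submodule.range_subtype]
  have hmap : (S.map A'.mkQ).map g = (S.map D.subtype).map A.mkQ := by
    rw [← Submodule.map_comp, hg, Submodule.liftQ_mkQ, hf, Submodule.map_comp]
  have hcompl : IsCompl (LinearMap.range g) (D'.map A.mkQ) := by
    rw [hrange]; exact compl_map_mkQ D D' hDD' A hA
  have := isSmallSub_map_iff' g hginj (D'.map A.mkQ) hcompl (S.map A'.mkQ)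
  rwa [hmap] at this

end Key


/-- A submodule `K` is small (superfluous) in `M`:
`K + N = M` implies `N = M` for all submodules `N`. -/
def IsSmallSub {R M : Type*} [Ring R] [AddCommGroup M] [Module R M]
    (K : Submodule R M) : Prop :=
  ∀ N : Submodule R M, K ⊔ N = ⊤ → N = ⊤

/-- `K` is small in the submodule `N` (where `K ≤ N`):
for every submodule `L ≤ N`, `K + L = N` implies `L = N`. -/
def IsSmallIn {R M : Type*} [Ring R] [AddCommGroup M] [Module R M]
    (K N : Submodule R M) : Prop :=
  ∀ L : Submodule R M, L ≤ N → K ⊔ L = N → L = N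

/-- The β* relation: `X β* Y` iff `(X+Y)/X ≪ M/X` and `(X+Y)/Y ≪ M/Y`. -/
def BetaStar {R M : Type*} [Ring R] [AddCommGroup M] [Module R M]
    (X Y : Submodule R M) : Prop :=
  IsSmallSub ((X ⊔ Y).map X.mkQ) ∧ IsSmallSub ((X ⊔ Y).map Y.mkQ)

/-- A submodule is cyclic if it is generated by a single element. -/
def IsCyclicSub {R M : Type*} [Ring R] [AddCommGroup M] [Module R M]
    (X : Submodule R M) : Prop :=
  ∃ m : M, X = Submodule.span R {m}

/-- A submodule is a direct summand if it has a complement. -/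
def IsDirectSummand {R M : Type*} [Ring R] [AddCommGroup M] [Module R M]
    (D : Submodule R M) : Prop :=
  ∃ D' : Submodule R M, IsCompl D D'

/-- `M` is principally Goldie*-lifting: every cyclic submodule is β* equivalent
to a direct summand. -/
def PrinGStarLifting (R M : Type*) [Ring R] [AddCommGroup M] [Module R M] : Prop :=
  ∀ X : Submodule R M, IsCyclicSub X → ∃ D : Submodule R M, IsDirectSummand D ∧ BetaStar X D

/-- The radical of `M`: the intersection of all maximal proper submodules
(equal to `M` if there are none). -/
def RadSub (R M : Type*) [Ring R] [AddCommGroup M] [Module R M] : Submodule R M :=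
  sInf {N : Submodule R M | IsCoatom N}

/-- If `M = D ⊕ D'` and `A, B ≤ D`, then `A β* B` in `M` iff
`A β* B` in `D`. -/
theorem stmt_0 {R M : Type*} [Ring R] [AddCommGroup M] [Module R M]
    (D D' : Submodule R M) (hDD' : IsCompl D D')
    (A B : Submodule R M) (hA : A ≤ D) (hB : B ≤ D) :
    BetaStar A B ↔ BetaStar (A.comap D.subtype) (B.comap D.subtype) := by
  set S : Submodule R D := A.comap D.subtype ⊔ B.comap D.subtype with hS
  have hSmap : S.map D.subtype = A ⊔ B := by
    rw [hS, Submodule.map_sup, Submodule.map_comap_subtype, Submodule.map_comap_subtype,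
      inf_eq_right.2 hA, inf_eq_right.2 hB]
  have h1 := key D D' hDD' A hA S
  have h2 := key D D' hDD' B hB S
  rw [hSmap] at h1 h2
  exact and_congr h1 h2
end

section
/- Let M be a module over a ring R, let D be a direct summand of M (i.e., M = D ⊕ D' for some submodule D'), and let X be a cyclic submodule of M. If D β* X in M, then D is a cyclic submodule. -/
/-- If a direct summand `D` of `M` is β* equivalent to a cyclic
submodule `X` of `M`, then `D` is cyclic. -/
theorem stmt_1 {R M : Type*} [Ring R] [AddCommGroup M] [Module R M]
    (D X : Submodule R M) (hD : IsDirectSummand D) (hX : IsCyclicSub X)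
    (h : BetaStar D X) :
    IsCyclicSub D := by
  obtain ⟨D', hc⟩ := hD
  obtain ⟨m, hm⟩ := hX
  -- X ⊔ D' = ⊤ by smallness of (D ⊔ X)/X in M/X
  have hXD' : X ⊔ D' = ⊤ := by
    have := h.2 ((X ⊔ D').map X.mkQ) ?_
    · rwa [Submodule.map_mkQ_eq_top, ← sup_assoc, sup_idem] at this
    · rw [← Submodule.map_sup, Submodule.map_mkQ_eq_top]
      have : D ⊔ D' = ⊤ := hc.sup_eq_top
      rw [← top_le_iff, ← this]
      exact sup_le (le_sup_of_le_right (le_sup_of_le_left le_sup_left))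
        (le_sup_of_le_right (le_sup_of_le_right le_sup_right))
  -- projection onto D
  let π := D.subtype ∘ₗ (D.projectionOnto D' hc)
  have hπD : ∀ e ∈ D, π e = e := fun e he => by
    simp [π, Submodule.projectionOnto_apply_left hc ⟨e, he⟩]
  have hπD' : ∀ e ∈ D', π e = 0 := fun e he => by
    simp [π, Submodule.projectionOnto_apply_of_mem_right hc he]
  refine ⟨π m, le_antisymm ?_ ?_⟩
  · intro e he
    have : e ∈ X ⊔ D' := hXD' ▸ Submodule.mem_top
    obtain ⟨x, hx, d', hd', rfl⟩ := Submodule.mem_sup.mp this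
    rw [hm, Submodule.mem_span_singleton] at hx
    obtain ⟨r, rfl⟩ := hx
    have : π (r • m + d') = r • m + d' := hπD _ he
    rw [map_add, map_smul, hπD' d' hd'] at this
    rw [← this]
    exact Submodule.mem_span_singleton.mpr ⟨r, by simp⟩
  · rw [Submodule.span_singleton_le_iff_mem]
    exact (D.projectionOnto D' hc m).2
end

section
/- Every principally lifting module is principally Goldie*-lifting: if M is a module over a ring R such that for every cyclic submodule X of M there exists a decomposition M = D ⊕ D' with D ⊆ X and X ∩ D' small in M, then for every cyclic submodule X of M there exists a direct summand D of M with X β* D. -/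
/-- Every principally lifting module is principally
Goldie*-lifting. -/
theorem stmt_3 {R M : Type*} [Ring R] [AddCommGroup M] [Module R M]
    (h : ∀ X : Submodule R M, IsCyclicSub X →
      ∃ D D' : Submodule R M, IsCompl D D' ∧ D ≤ X ∧ IsSmallSub (X ⊓ D')) :
    PrinGStarLifting R M := by
  intro X hX
  obtain ⟨D, D', hcompl, hDX, hsmall⟩ := h X hX
  have hXD : X ⊔ D = X := sup_eq_left.mpr hDX
  have hmod : D ⊔ D' ⊓ X = X := by
    rw [← sup_inf_assoc_of_le D' hDX, hcompl.sup_eq_top, top_inf_eq]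
  refine ⟨D, ⟨D', hcompl⟩, ?_, ?_⟩
  · intro N hN
    have hb : (X ⊔ D).map X.mkQ = ⊥ := by
      rw [hXD]
      exact le_bot_iff.mp (Submodule.map_le_iff_le_comap.mpr
        (by rw [Submodule.comap_bot, Submodule.ker_mkQ]))
    rwa [hb, bot_sup_eq] at hN
  · intro N hN
    set N' := N.comap D.mkQ with hN'
    have hDN' : D ≤ N' := Submodule.le_comap_mkQ D N
    have hmapN' : N'.map D.mkQ = N :=
      Submodule.map_comap_eq_of_surjective D.mkQ_surjective N
    have key : ((X ⊓ D') ⊔ N').map D.mkQ = ⊤ := by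
      rw [Submodule.map_sup, hmapN']
      have heq : (X ⊓ D').map D.mkQ = (X ⊔ D).map D.mkQ := by
        rw [hXD]
        conv_rhs => rw [← hmod]
        rw [Submodule.map_sup]
        have hb : D.map D.mkQ = ⊥ := le_bot_iff.mp (Submodule.map_le_iff_le_comap.mpr
          (by rw [Submodule.comap_bot, Submodule.ker_mkQ]))
        rw [hb, bot_sup_eq, inf_comm]
      rw [heq, hN]
    have htop : (X ⊓ D') ⊔ N' = ⊤ := by
      have h3 := congrArg (Submodule.comap D.mkQ) key
      rw [Submodule.comap_map_eq, Submodule.ker_mkQ, Submodule.comap_top,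
        sup_assoc, sup_of_le_left hDN'] at h3
      exact h3
    have hNt : N' = ⊤ := hsmall N' htop
    rw [← hmapN', hNt, Submodule.map_top, Submodule.range_mkQ]
end

section
/- Every principally Goldie*-lifting module is principally supplemented: if M is a module over a ring R such that for every cyclic submodule X of M there exists a direct summand D of M with X β* D, then for every cyclic submodule X of M there exists a submodule N of M with M = N + X and N ∩ X small in N. -/
/-- Every principally Goldie*-lifting module is principally
supplemented. -/
theorem stmt_4 {R M : Type*} [Ring R] [AddCommGroup M] [Module R M]
    (h : PrinGStarLifting R M) :
    ∀ X : Submodule R M, IsCyclicSub X →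
      ∃ N : Submodule R M, N ⊔ X = ⊤ ∧ IsSmallIn (N ⊓ X) N := by
  intro X hX
  obtain ⟨D, ⟨D', hcompl⟩, h1, h2⟩ := h X hX
  have hDD' : D ⊔ D' = ⊤ := hcompl.codisjoint.eq_top
  have hdisj : D ⊓ D' = ⊥ := hcompl.disjoint.eq_bot
  refine ⟨D', ?_, ?_⟩
  · -- D' ⊔ X = ⊤
    have htop : ((X ⊔ D).map X.mkQ) ⊔ (D'.map X.mkQ) = ⊤ := by
      rw [← Submodule.map_sup, sup_assoc, hDD', sup_top_eq, Submodule.map_top,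
        Submodule.range_mkQ]
    have hD' : D'.map X.mkQ = ⊤ := h1 _ htop
    have := congrArg (Submodule.comap X.mkQ) hD'
    rw [Submodule.comap_map_eq, Submodule.ker_mkQ, Submodule.comap_top] at this
    rwa [sup_comm] at this ⊢
  · -- smallness
    intro L hL hsum
    have hsup : D ⊔ (X ⊔ L) = ⊤ := by
      have : D ⊔ D' ≤ D ⊔ (X ⊔ L) := by
        apply sup_le_sup_left
        rw [← hsum]
        exact sup_le (le_trans inf_le_right le_sup_left) le_sup_right
      exact top_le_iff.mp (hDD' ▸ this)
    have htop : ((X ⊔ D).map D.mkQ) ⊔ (L.map D.mkQ) = ⊤ := by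
      apply top_le_iff.mp
      have : Submodule.map D.mkQ (D ⊔ (X ⊔ L)) = ⊤ := by
        rw [hsup, Submodule.map_top, Submodule.range_mkQ]
      rw [← this, Submodule.map_sup, Submodule.map_sup]
      refine sup_le ?_ (sup_le ?_ ?_)
      · exact le_sup_of_le_left (Submodule.map_mono le_sup_right)
      · exact le_sup_of_le_left (Submodule.map_mono le_sup_left)
      · exact le_sup_right
    have hLt : L.map D.mkQ = ⊤ := h2 _ htop
    have hLD : L ⊔ D = ⊤ := by
      have := congrArg (Submodule.comap D.mkQ) hLt
      rwa [Submodule.comap_map_eq, Submodule.ker_mkQ, Submodule.comap_top] at this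
    calc L = L ⊔ (D ⊓ D') := by rw [hdisj, sup_bot_eq]
    _ = (L ⊔ D) ⊓ D' := (sup_inf_assoc_of_le D hL).symm
    _ = D' := by rw [hLD, top_inf_eq]
end

section
/- Let M be a nonzero indecomposable module over a ring R (the only direct summands of M are 0 and M). Then the following are equivalent: (a) M is principally lifting; (b) M is principally hollow; (c) M is principally Goldie*-lifting. -/
lemma small_bot_mkQ {R M : Type*} [Ring R] [AddCommGroup M] [Module R M]
    (X : Submodule R M) :
    IsSmallSub (X.map (⊥ : Submodule R M).mkQ) ↔ IsSmallSub X := by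
  set q := (⊥ : Submodule R M).mkQ
  have hker : LinearMap.ker q = ⊥ := Submodule.ker_mkQ ⊥
  have hsurj : Function.Surjective q := Submodule.mkQ_surjective ⊥
  have hcm : ∀ S : Submodule R M, Submodule.comap q (Submodule.map q S) = S := by
    intro S
    rw [Submodule.comap_map_eq, hker, sup_bot_eq]
  constructor
  · intro h N hN
    have h2 : Submodule.map q X ⊔ Submodule.map q N = ⊤ := by
      rw [← Submodule.map_sup, hN, Submodule.map_top, Submodule.range_mkQ]
    have h3 := h _ h2
    have := hcm N
    rw [h3, Submodule.comap_top] at this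
    exact this.symm
  · intro h N hN
    have h1 : X ⊔ Submodule.comap q N = ⊤ := by
      have : Submodule.comap q (Submodule.map q X ⊔ N) = Submodule.comap q ⊤ := by
        rw [hN]
      rw [Submodule.comap_top] at this
      refine top_unique ?_
      rw [← this]
      intro x hx
      rcases Submodule.mem_sup.mp hx with ⟨a, ha, b, hb, hab⟩
      rcases (Submodule.mem_map.mp ha) with ⟨a', ha', rfl⟩
      have hbmem : x - a' ∈ Submodule.comap q N := by
        have : q (x - a') = b := by
          rw [map_sub, ← hab]; abel
        simpa [Submodule.mem_comap, this] using hb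
      have : x = a' + (x - a') := by abel
      rw [this]
      exact Submodule.add_mem_sup ha' hbmem
    have h2 := h _ h1
    have : N = Submodule.map q (Submodule.comap q N) :=
      (Submodule.map_comap_eq_of_surjective hsurj N).symm
    rw [h2, Submodule.map_top, Submodule.range_mkQ] at this
    exact this

/-- For a nonzero indecomposable module `M`, the following are
equivalent: (a) principally lifting, (b) principally hollow,
(c) principally Goldie*-lifting. -/
theorem stmt_5 {R M : Type*} [Ring R] [AddCommGroup M] [Module R M]
    [Nontrivial M]
    (hind : ∀ D : Submodule R M, IsDirectSummand D → D = ⊥ ∨ D = ⊤) :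
    ((∀ X : Submodule R M, IsCyclicSub X →
        ∃ D D' : Submodule R M, IsCompl D D' ∧ D ≤ X ∧ IsSmallSub (X ⊓ D')) ↔
      (∀ X : Submodule R M, IsCyclicSub X → X ≠ ⊤ → IsSmallSub X)) ∧
    ((∀ X : Submodule R M, IsCyclicSub X → X ≠ ⊤ → IsSmallSub X) ↔
      PrinGStarLifting R M) := by
  constructor
  · constructor
    · -- (a) → (b)
      intro ha X hX hXne N hN
      obtain ⟨D, D', hcompl, hDX, hsmall⟩ := ha X hX
      rcases hind D ⟨D', hcompl⟩ with hD | hD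
      · subst hD
        have hD' : D' = ⊤ := by
          have := hcompl.symm.sup_eq_top
          simpa using this
        subst hD'
        rw [inf_top_eq] at hsmall
        exact hsmall N hN
      · subst hD
        exact absurd (top_unique hDX) hXne
    · -- (b) → (a)
      intro hb X hX
      by_cases hXt : X = ⊤
      · refine ⟨⊤, ⊥, isCompl_top_bot, le_of_eq hXt.symm, ?_⟩
        intro N hN
        simpa using hN
      · refine ⟨⊥, ⊤, isCompl_bot_top, bot_le, ?_⟩
        rw [inf_top_eq]
        exact hb X hX hXt
  · constructor
    · -- (b) → (c)
      intro hb X hX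
      by_cases hXt : X = ⊤
      · refine ⟨⊤, ⟨⊥, isCompl_top_bot⟩, ?_, ?_⟩ <;>
        · subst hXt
          intro N _
          haveI : Subsingleton (M ⧸ (⊤ : Submodule R M)) :=
            Submodule.Quotient.subsingleton_iff.mpr rfl
          exact Subsingleton.elim N ⊤
      · refine ⟨⊥, ⟨⊤, isCompl_bot_top⟩, ?_, ?_⟩
        · rw [sup_bot_eq]
          have hmap : X.map X.mkQ = ⊥ := by
            refine le_bot_iff.mp (Submodule.map_le_iff_le_comap.mpr ?_)
            rw [Submodule.comap_bot, Submodule.ker_mkQ]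
          rw [hmap]
          intro N hN
          simpa using hN
        · rw [sup_bot_eq]
          exact (small_bot_mkQ X).mpr (hb X hX hXt)
    · -- (c) → (b)
      intro hc X hX hXne N hN
      obtain ⟨D, hDsum, hbeta⟩ := hc X hX
      rcases hind D hDsum with hD | hD
      · subst hD
        simp only [BetaStar, sup_bot_eq] at hbeta
        exact (small_bot_mkQ X).mp hbeta.2 N hN
      · subst hD
        exfalso
        have h1 : (X ⊔ ⊤).map X.mkQ = ⊤ := by
          rw [sup_top_eq, Submodule.map_top, Submodule.range_mkQ]
        have h2 := hbeta.1
        rw [h1] at h2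
        have h3 : (⊥ : Submodule R (M ⧸ X)) = ⊤ := h2 ⊥ (by simp)
        have : Subsingleton (M ⧸ X) := by
          constructor
          intro a b
          have ha : a ∈ (⊤ : Submodule R (M ⧸ X)) := trivial
          have hb' : b ∈ (⊤ : Submodule R (M ⧸ X)) := trivial
          rw [← h3, Submodule.mem_bot] at ha hb'
          rw [ha, hb']
        exact hXne (Submodule.Quotient.subsingleton_iff.mp this)
end

section
/- Let M = M₁ ⊕ M₂ be a duo module over a ring R (every submodule N of M satisfies f(N) ⊆ N for every R-linear endomorphism f of M). Then M is principally Goldie*-lifting if and only if both M₁ and M₂ are principally Goldie*-lifting. -/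
section aux
variable {R M : Type*} [Ring R] [AddCommGroup M] [Module R M]

lemma map_mkQ_eq_top' (X N : Submodule R M) : N.map X.mkQ = ⊤ ↔ X ⊔ N = ⊤ := by
  constructor
  · intro h
    have h2 := congrArg (Submodule.comap X.mkQ) h
    rwa [Submodule.comap_map_eq, Submodule.ker_mkQ, Submodule.comap_top, sup_comm] at h2
  · intro h
    have h3 : (X ⊔ N).map X.mkQ = ⊤ := by
      rw [h, Submodule.map_top, Submodule.range_mkQ]
    have hX : X.map X.mkQ = ⊥ := by
      rw [eq_bot_iff]
      refine Submodule.map_le_iff_le_comap.2 ?_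
      rw [Submodule.comap_bot, Submodule.ker_mkQ]
    rwa [Submodule.map_sup, hX, bot_sup_eq] at h3

lemma sup_absorb {X Y N : Submodule R M} (h : X ≤ N) : X ⊔ ((X ⊔ Y) ⊔ N) = Y ⊔ N := by
  apply le_antisymm
  · exact sup_le (h.trans le_sup_right)
      (sup_le (sup_le (h.trans le_sup_right) le_sup_left) le_sup_right)
  · exact sup_le (le_sup_right.trans (le_sup_left.trans le_sup_right))
      (le_sup_right.trans le_sup_right)

lemma small_mkQ_iff (X Y : Submodule R M) :
    IsSmallSub ((X ⊔ Y).map X.mkQ) ↔ ∀ N, X ≤ N → Y ⊔ N = ⊤ → N = ⊤ := by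
  constructor
  · intro h N hXN hYN
    have h1 : ((X ⊔ Y).map X.mkQ) ⊔ N.map X.mkQ = ⊤ := by
      rw [← Submodule.map_sup, map_mkQ_eq_top', sup_absorb hXN, hYN]
    have h2 := h _ h1
    rw [map_mkQ_eq_top', sup_eq_right.mpr hXN] at h2
    exact h2
  · intro h Q hQ
    set N := Q.comap X.mkQ with hN
    have hXN : X ≤ N := by
      have h0 := LinearMap.ker_le_comap (p := Q) X.mkQ
      rwa [Submodule.ker_mkQ] at h0
    have hQN : N.map X.mkQ = Q :=
      Submodule.map_comap_eq_of_surjective (Submodule.mkQ_surjective X) Q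
    rw [← hQN, ← Submodule.map_sup, map_mkQ_eq_top', sup_absorb hXN] at hQ
    rw [← hQN, h N hXN hQ, Submodule.map_top, Submodule.range_mkQ]

lemma betaStar_iff (X Y : Submodule R M) :
    BetaStar X Y ↔ (∀ N, X ≤ N → Y ⊔ N = ⊤ → N = ⊤) ∧
      (∀ N, Y ≤ N → X ⊔ N = ⊤ → N = ⊤) := by
  have h1 := small_mkQ_iff X Y
  have h2 := small_mkQ_iff Y X
  rw [sup_comm Y X] at h2
  exact and_congr h1 h2


variable (P : Submodule R M)

lemma map_subtype_inj : Function.Injective (Submodule.map P.subtype) :=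
  Submodule.map_injective_of_injective P.injective_subtype

lemma map_subtype_top : (⊤ : Submodule R P).map P.subtype = P := by
  rw [Submodule.map_top, Submodule.range_subtype]

lemma pgl_subtype_iff :
    PrinGStarLifting R ↥P ↔
      ∀ X : Submodule R M, X ≤ P → IsCyclicSub X →
        ∃ D E : Submodule R M, D ≤ P ∧ E ≤ P ∧ D ⊓ E = ⊥ ∧ D ⊔ E = P ∧
          (∀ N : Submodule R M, N ≤ P → X ≤ N → D ⊔ N = P → N = P) ∧
          (∀ N : Submodule R M, N ≤ P → D ≤ N → X ⊔ N = P → N = P) := by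
  constructor
  · intro h X hXP hXc
    obtain ⟨m, rfl⟩ := hXc
    have hm : m ∈ P := hXP (Submodule.mem_span_singleton_self m)
    obtain ⟨D', ⟨E', hDE⟩, hb⟩ := h (Submodule.span R {⟨m, hm⟩}) ⟨⟨m, hm⟩, rfl⟩
    rw [betaStar_iff] at hb
    have hmapX : (Submodule.span R ({⟨m, hm⟩} : Set P)).map P.subtype = Submodule.span R {m} := by
      rw [Submodule.map_span, Set.image_singleton]; rfl
    refine ⟨D'.map P.subtype, E'.map P.subtype, Submodule.map_subtype_le _ _,
      Submodule.map_subtype_le _ _, ?_, ?_, ?_, ?_⟩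
    · rw [← Submodule.map_inf _ P.injective_subtype, disjoint_iff.mp hDE.disjoint,
        Submodule.map_bot]
    · rw [← Submodule.map_sup, codisjoint_iff.mp hDE.codisjoint, map_subtype_top]
    · intro N hNP hXN hDN
      have hmapN : (N.comap P.subtype).map P.subtype = N := by
        rw [Submodule.map_comap_subtype, inf_eq_right.mpr hNP]
      have h1 : Submodule.span R ({⟨m, hm⟩} : Set P) ≤ N.comap P.subtype := by
        rw [Submodule.span_le, Set.singleton_subset_iff]
        exact hXN (Submodule.mem_span_singleton_self m)
      have h2 : D' ⊔ N.comap P.subtype = ⊤ := by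
        apply map_subtype_inj P
        rw [Submodule.map_sup, hmapN, map_subtype_top, hDN]
      have := hb.1 _ h1 h2
      rw [← hmapN, this, map_subtype_top]
    · intro N hNP hDN hXN
      have hmapN : (N.comap P.subtype).map P.subtype = N := by
        rw [Submodule.map_comap_subtype, inf_eq_right.mpr hNP]
      have h1 : D' ≤ N.comap P.subtype := Submodule.map_le_iff_le_comap.mp hDN
      have h2 : Submodule.span R ({⟨m, hm⟩} : Set P) ⊔ N.comap P.subtype = ⊤ := by
        apply map_subtype_inj P
        rw [Submodule.map_sup, hmapN, map_subtype_top, hmapX, hXN]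
      have := hb.2 _ h1 h2
      rw [← hmapN, this, map_subtype_top]
  · intro h X' hX'c
    obtain ⟨m', rfl⟩ := hX'c
    have hmapX : (Submodule.span R ({m'} : Set P)).map P.subtype
        = Submodule.span R {(m' : M)} := by
      rw [Submodule.map_span, Set.image_singleton]; rfl
    obtain ⟨D, E, hDP, hEP, hinf, hsup, c1, c2⟩ :=
      h _ (Submodule.map_subtype_le _ _) ⟨(m' : M), hmapX⟩
    have hmapD : (D.comap P.subtype).map P.subtype = D := by
      rw [Submodule.map_comap_subtype, inf_eq_right.mpr hDP]
    have hmapE : (E.comap P.subtype).map P.subtype = E := by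
      rw [Submodule.map_comap_subtype, inf_eq_right.mpr hEP]
    refine ⟨D.comap P.subtype, ⟨E.comap P.subtype, isCompl_iff.mpr ⟨disjoint_iff.mpr ?_,
      codisjoint_iff.mpr ?_⟩⟩, ?_⟩
    · apply map_subtype_inj P
      rw [Submodule.map_inf _ P.injective_subtype, hmapD, hmapE, hinf, Submodule.map_bot]
    · apply map_subtype_inj P
      rw [Submodule.map_sup, hmapD, hmapE, hsup, map_subtype_top]
    · rw [betaStar_iff]
      constructor
      · intro N' h1 h2
        apply map_subtype_inj P
        rw [map_subtype_top]
        refine c1 (N'.map P.subtype) (Submodule.map_subtype_le _ _) ?_ ?_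
        · exact Submodule.map_mono h1
        · rw [← hmapD, ← Submodule.map_sup, h2, map_subtype_top]
      · intro N' h1 h2
        apply map_subtype_inj P
        rw [map_subtype_top]
        refine c2 (N'.map P.subtype) (Submodule.map_subtype_le _ _) ?_ ?_
        · rw [← hmapD]; exact Submodule.map_mono h1
        · rw [← Submodule.map_sup, h2, map_subtype_top]


variable {M₁ M₂ : Submodule R M}

/-- first projection as an endomorphism of `M` -/
noncomputable def proj1 (hcompl : IsCompl M₁ M₂) : M →ₗ[R] M :=
  M₁.subtype ∘ₗ M₁.projectionOnto M₂ hcompl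

lemma proj1_mem (hcompl : IsCompl M₁ M₂) (x : M) : proj1 hcompl x ∈ M₁ :=
  SetLike.coe_mem _

lemma proj1_add (hcompl : IsCompl M₁ M₂) (x : M) :
    proj1 hcompl x + proj1 hcompl.symm x = x :=
  Submodule.projection_add_projection_eq_self hcompl x

lemma proj1_left (hcompl : IsCompl M₁ M₂) {x : M} (hx : x ∈ M₁) : proj1 hcompl x = x :=
  congrArg Subtype.val (Submodule.linearProjOfIsCompl_apply_left hcompl ⟨x, hx⟩)

lemma proj1_right (hcompl : IsCompl M₁ M₂) {x : M} (hx : x ∈ M₂) : proj1 hcompl x = 0 := by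
  have := Submodule.projectionOnto_apply_of_mem_right hcompl hx
  simp [proj1, this]

lemma duo_decomp (hcompl : IsCompl M₁ M₂)
    (hduo : ∀ (f : M →ₗ[R] M) (N : Submodule R M), N.map f ≤ N)
    (N : Submodule R M) : N = (N ⊓ M₁) ⊔ (N ⊓ M₂) := by
  refine le_antisymm ?_ (sup_le inf_le_left inf_le_left)
  intro n hn
  have h1 : proj1 hcompl n ∈ N ⊓ M₁ :=
    ⟨hduo (proj1 hcompl) N (Submodule.mem_map_of_mem hn), proj1_mem hcompl n⟩
  have h2 : proj1 hcompl.symm n ∈ N ⊓ M₂ :=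
    ⟨hduo (proj1 hcompl.symm) N (Submodule.mem_map_of_mem hn), proj1_mem hcompl.symm n⟩
  have := Submodule.add_mem_sup h1 h2
  rwa [proj1_add hcompl n] at this

lemma eq_left_of_sup (hcompl : IsCompl M₁ M₂) {A B : Submodule R M}
    (hA : A ≤ M₁) (hB : B ≤ M₂) (h : A ⊔ B = ⊤) : A = M₁ := by
  have hb0 : B ⊓ M₁ = ⊥ := by
    rw [eq_bot_iff, ← disjoint_iff.mp hcompl.symm.disjoint]
    exact inf_le_inf_right _ hB
  calc A = A ⊔ B ⊓ M₁ := by rw [hb0, sup_bot_eq]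
    _ = (A ⊔ B) ⊓ M₁ := (sup_inf_assoc_of_le B hA).symm
    _ = M₁ := by rw [h, top_inf_eq]

lemma dir1 (hcompl : IsCompl M₁ M₂)
    (hduo : ∀ (f : M →ₗ[R] M) (N : Submodule R M), N.map f ≤ N)
    (hM : PrinGStarLifting R M) : PrinGStarLifting R ↥M₁ := by
  rw [pgl_subtype_iff]
  intro X hXP hXc
  obtain ⟨D, ⟨D', hDD'⟩, hb⟩ := hM X hXc
  rw [betaStar_iff] at hb
  refine ⟨D ⊓ M₁, D' ⊓ M₁, inf_le_right, inf_le_right, ?_, ?_, ?_, ?_⟩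
  · rw [eq_bot_iff, ← disjoint_iff.mp hDD'.disjoint]
    exact le_inf (inf_le_left.trans inf_le_left) (inf_le_right.trans inf_le_left)
  · have htop : ((D ⊓ M₁) ⊔ (D' ⊓ M₁)) ⊔ ((D ⊓ M₂) ⊔ (D' ⊓ M₂)) = ⊤ := by
      rw [sup_sup_sup_comm, ← duo_decomp hcompl hduo D, ← duo_decomp hcompl hduo D',
        codisjoint_iff.mp hDD'.codisjoint]
    exact eq_left_of_sup hcompl (sup_le inf_le_right inf_le_right)
      (sup_le inf_le_right inf_le_right) htop
  · intro N hNP hXN hDN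
    have h2 : D ⊔ (N ⊔ M₂) = ⊤ := by
      rw [eq_top_iff, ← codisjoint_iff.mp hcompl.codisjoint]
      refine sup_le ?_ (le_sup_of_le_right le_sup_right)
      rw [← hDN]
      exact sup_le (inf_le_left.trans le_sup_left) (le_sup_of_le_right le_sup_left)
    have h3 := hb.1 (N ⊔ M₂) (hXN.trans le_sup_left) h2
    exact eq_left_of_sup hcompl hNP le_rfl h3
  · intro N hNP hDN hXN
    have hDle : D ≤ N ⊔ M₂ := by
      rw [duo_decomp hcompl hduo D]
      exact sup_le (le_sup_of_le_left hDN) (le_sup_of_le_right inf_le_right)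
    have h4 : X ⊔ (N ⊔ M₂) = ⊤ := by
      rw [eq_top_iff, ← codisjoint_iff.mp hcompl.codisjoint, ← sup_assoc, hXN]
    have h5 := hb.2 (N ⊔ M₂) hDle h4
    exact eq_left_of_sup hcompl hNP le_rfl h5

lemma dir2 (hcompl : IsCompl M₁ M₂)
    (hduo : ∀ (f : M →ₗ[R] M) (N : Submodule R M), N.map f ≤ N)
    (h1 : PrinGStarLifting R ↥M₁) (h2 : PrinGStarLifting R ↥M₂) :
    PrinGStarLifting R M := by
  rw [pgl_subtype_iff] at h1 h2
  intro X hXc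
  obtain ⟨m, rfl⟩ := hXc
  set x₁ := proj1 hcompl m with hx₁
  set x₂ := proj1 hcompl.symm m with hx₂
  set X₁ := Submodule.span R {x₁} with hX₁def
  set X₂ := Submodule.span R {x₂} with hX₂def
  have hX₁P : X₁ ≤ M₁ := by
    rw [hX₁def, Submodule.span_le, Set.singleton_subset_iff]; exact proj1_mem hcompl m
  have hX₂P : X₂ ≤ M₂ := by
    rw [hX₂def, Submodule.span_le, Set.singleton_subset_iff]; exact proj1_mem hcompl.symm m
  have hX₁X : X₁ ≤ Submodule.span R {m} := by
    rw [hX₁def, Submodule.span_le, Set.singleton_subset_iff]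
    exact hduo (proj1 hcompl) _ (Submodule.mem_map_of_mem (Submodule.mem_span_singleton_self m))
  have hX₂X : X₂ ≤ Submodule.span R {m} := by
    rw [hX₂def, Submodule.span_le, Set.singleton_subset_iff]
    exact hduo (proj1 hcompl.symm) _
      (Submodule.mem_map_of_mem (Submodule.mem_span_singleton_self m))
  have hXeq : Submodule.span R {m} = X₁ ⊔ X₂ := by
    refine le_antisymm ?_ (sup_le hX₁X hX₂X)
    rw [Submodule.span_le, Set.singleton_subset_iff]
    have := Submodule.add_mem_sup (S := X₁) (T := X₂)
      (Submodule.mem_span_singleton_self x₁) (Submodule.mem_span_singleton_self x₂)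
    rwa [proj1_add hcompl m] at this
  obtain ⟨D₁, E₁, hD₁P, hE₁P, hinf₁, hsup₁, c1₁, c2₁⟩ := h1 X₁ hX₁P ⟨x₁, rfl⟩
  obtain ⟨D₂, E₂, hD₂P, hE₂P, hinf₂, hsup₂, c1₂, c2₂⟩ := h2 X₂ hX₂P ⟨x₂, rfl⟩
  refine ⟨D₁ ⊔ D₂, ⟨E₁ ⊔ E₂, isCompl_iff.mpr ⟨disjoint_iff.mpr ?_, codisjoint_iff.mpr ?_⟩⟩, ?_⟩
  · rw [eq_bot_iff]
    rintro x ⟨hxD, hxE⟩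
    obtain ⟨d₁, hd₁, d₂, hd₂, hx⟩ := Submodule.mem_sup.mp hxD
    obtain ⟨e₁, he₁, e₂, he₂, hx'⟩ := Submodule.mem_sup.mp hxE
    have hp1 : proj1 hcompl x = d₁ := by
      rw [← hx, map_add, proj1_left hcompl (hD₁P hd₁), proj1_right hcompl (hD₂P hd₂), add_zero]
    have hp1' : proj1 hcompl x = e₁ := by
      rw [← hx', map_add, proj1_left hcompl (hE₁P he₁), proj1_right hcompl (hE₂P he₂), add_zero]
    have hp2 : proj1 hcompl.symm x = d₂ := by
      rw [← hx, map_add, proj1_right hcompl.symm (hD₁P hd₁),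
        proj1_left hcompl.symm (hD₂P hd₂), zero_add]
    have hp2' : proj1 hcompl.symm x = e₂ := by
      rw [← hx', map_add, proj1_right hcompl.symm (hE₁P he₁),
        proj1_left hcompl.symm (hE₂P he₂), zero_add]
    have hd₁0 : d₁ = 0 := by
      have : d₁ ∈ D₁ ⊓ E₁ := ⟨hd₁, hp1 ▸ hp1' ▸ he₁⟩
      rwa [hinf₁, Submodule.mem_bot] at this
    have hd₂0 : d₂ = 0 := by
      have : d₂ ∈ D₂ ⊓ E₂ := ⟨hd₂, hp2 ▸ hp2' ▸ he₂⟩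
      rwa [hinf₂, Submodule.mem_bot] at this
    rw [Submodule.mem_bot, ← hx, hd₁0, hd₂0, add_zero]
  · rw [sup_sup_sup_comm, hsup₁, hsup₂, codisjoint_iff.mp hcompl.codisjoint]
  · rw [betaStar_iff]
    constructor
    · intro N hXN hsup
      have hN := duo_decomp hcompl hduo N
      have key : (D₁ ⊔ N ⊓ M₁) ⊔ (D₂ ⊔ N ⊓ M₂) = ⊤ := by
        rw [← sup_sup_sup_comm, ← hN, hsup]
      have hA : D₁ ⊔ N ⊓ M₁ = M₁ :=
        eq_left_of_sup hcompl (sup_le hD₁P inf_le_right) (sup_le hD₂P inf_le_right) key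
      have hB : D₂ ⊔ N ⊓ M₂ = M₂ := by
        exact eq_left_of_sup hcompl.symm (B := D₁ ⊔ N ⊓ M₁) (sup_le hD₂P inf_le_right)
          (sup_le hD₁P inf_le_right) (by rw [sup_comm] at key; exact key)
      have hN₁ : N ⊓ M₁ = M₁ :=
        c1₁ _ inf_le_right (le_inf (hX₁X.trans hXN) hX₁P) hA
      have hN₂ : N ⊓ M₂ = M₂ :=
        c1₂ _ inf_le_right (le_inf (hX₂X.trans hXN) hX₂P) hB
      rw [hN, hN₁, hN₂, codisjoint_iff.mp hcompl.codisjoint]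
    · intro N hDN hsup
      have hN := duo_decomp hcompl hduo N
      have key : (X₁ ⊔ N ⊓ M₁) ⊔ (X₂ ⊔ N ⊓ M₂) = ⊤ := by
        rw [← sup_sup_sup_comm, ← hN, ← hXeq, hsup]
      have hA : X₁ ⊔ N ⊓ M₁ = M₁ :=
        eq_left_of_sup hcompl (sup_le hX₁P inf_le_right) (sup_le hX₂P inf_le_right) key
      have hB : X₂ ⊔ N ⊓ M₂ = M₂ := by
        exact eq_left_of_sup hcompl.symm (B := X₁ ⊔ N ⊓ M₁) (sup_le hX₂P inf_le_right)
          (sup_le hX₁P inf_le_right) (by rw [sup_comm] at key; exact key)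
      have hN₁ : N ⊓ M₁ = M₁ :=
        c2₁ _ inf_le_right (le_inf (le_sup_left.trans hDN) hD₁P) hA
      have hN₂ : N ⊓ M₂ = M₂ :=
        c2₂ _ inf_le_right (le_inf (le_sup_right.trans hDN) hD₂P) hB
      rw [hN, hN₁, hN₂, codisjoint_iff.mp hcompl.codisjoint]


end aux

/-- Let `M = M₁ ⊕ M₂` be a duo module. Then `M` is principally
Goldie*-lifting iff `M₁` and `M₂` are principally Goldie*-lifting. -/
theorem stmt_7 {R M : Type*} [Ring R] [AddCommGroup M] [Module R M]
    (M₁ M₂ : Submodule R M) (hcompl : IsCompl M₁ M₂)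
    (hduo : ∀ (f : M →ₗ[R] M) (N : Submodule R M), N.map f ≤ N) :
    PrinGStarLifting R M ↔ PrinGStarLifting R M₁ ∧ PrinGStarLifting R M₂ :=
  ⟨fun h => ⟨dir1 hcompl hduo h, dir1 hcompl.symm hduo h⟩,
   fun h => dir2 hcompl hduo h.1 h.2⟩
end

section
/- Let M be a module over a ring R such that every cyclic submodule X of M has a supplement D' that is a direct summand, say M = D ⊕ D' with M = X + D' and X ∩ D' small in D', where moreover D is D'-projective (for every surjective R-linear map g : D' → T and every R-linear map f : D → T there exists an R-linear map h : D → D' with g ∘ h = f). Then M is principally Goldie*-lifting. -/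
/-- If every cyclic submodule of `M` has a supplement `D'` that is
a direct summand (`M = D ⊕ D'`) with `D` being `D'`-projective, then `M` is
principally Goldie*-lifting. -/
theorem stmt_8 {R : Type*} {M : Type v} [Ring R] [AddCommGroup M] [Module R M]
    (h : ∀ X : Submodule R M, IsCyclicSub X →
      ∃ D D' : Submodule R M, IsCompl D D' ∧ X ⊔ D' = ⊤ ∧ IsSmallIn (X ⊓ D') D' ∧
        ∀ (T : Type v) [AddCommGroup T] [Module R T] (g : D' →ₗ[R] T)
          (f : D →ₗ[R] T), Function.Surjective g →
            ∃ k : D →ₗ[R] D', g ∘ₗ k = f) :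
    PrinGStarLifting R M := by
  intro X hX
  obtain ⟨D, D', hcompl, hsup, hsmall, hproj⟩ := h X hX
  -- the quotient map restricted to D' is surjective
  have hgsurj : Function.Surjective (X.mkQ ∘ₗ D'.subtype) := by
    intro y
    obtain ⟨m, rfl⟩ := Submodule.mkQ_surjective X y
    have hm : m ∈ X ⊔ D' := hsup ▸ Submodule.mem_top
    obtain ⟨x, hx, d', hd', rfl⟩ := Submodule.mem_sup.mp hm
    refine ⟨⟨d', hd'⟩, ?_⟩
    simp only [LinearMap.comp_apply, Submodule.subtype_apply, Submodule.mkQ_apply]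
    rw [Submodule.Quotient.eq]
    simpa using X.neg_mem hx
  obtain ⟨k, hk⟩ := hproj (M ⧸ X) (X.mkQ ∘ₗ D'.subtype) (X.mkQ ∘ₗ D.subtype) hgsurj
  have hkapp : ∀ d : D, X.mkQ ((k d : M)) = X.mkQ (d : M) := by
    intro d
    have := congrArg (fun f : D →ₗ[R] M ⧸ X => f d) hk
    simpa using this
  set φ : D →ₗ[R] M := D.subtype - D'.subtype ∘ₗ k with hφ
  have hφapp : ∀ d : D, φ d = (d : M) - (k d : M) := fun d => rfl
  set X' : Submodule R M := LinearMap.range φ with hX'def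
  have hX'leX : X' ≤ X := by
    rintro _ ⟨d, rfl⟩
    rw [← Submodule.Quotient.mk_eq_zero]
    show X.mkQ (φ d) = 0
    rw [hφapp, map_sub, hkapp, sub_self]
  have hdisj : Disjoint X' D' := by
    rw [Submodule.disjoint_def]
    rintro _ ⟨d, rfl⟩ hmem
    have hdD' : (d : M) ∈ D' := by
      have : (d : M) = φ d + (k d : M) := by rw [hφapp]; abel
      rw [this]; exact D'.add_mem hmem (k d).2
    have hd0 : (d : M) = 0 :=
      Submodule.disjoint_def.mp hcompl.disjoint (d : M) d.2 hdD'
    have : d = 0 := Subtype.ext hd0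
    rw [this, map_zero]
  have hcodisj : X' ⊔ D' = ⊤ := by
    rw [eq_top_iff]
    intro m _
    have hm : m ∈ D ⊔ D' := hcompl.codisjoint.eq_top ▸ Submodule.mem_top
    obtain ⟨d, hd, d', hd', rfl⟩ := Submodule.mem_sup.mp hm
    refine Submodule.mem_sup.mpr ⟨φ ⟨d, hd⟩, ⟨⟨d, hd⟩, rfl⟩,
      (k ⟨d, hd⟩ : M) + d', D'.add_mem (k ⟨d, hd⟩).2 hd', ?_⟩
    rw [hφapp]; abel
  have hcompl' : IsCompl X' D' := ⟨hdisj, codisjoint_iff.mpr hcodisj⟩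
  -- X ≤ X' ⊔ (X ⊓ D')
  have hXdec : X ≤ X' ⊔ (X ⊓ D') := by
    intro x hx
    have : x ∈ X' ⊔ D' := hcodisj ▸ Submodule.mem_top
    obtain ⟨x', hx', e, he, rfl⟩ := Submodule.mem_sup.mp this
    have he' : e ∈ X := by
      have heq : x' + e - x' = e := by abel
      simpa [heq] using X.sub_mem hx (hX'leX hx')
    exact Submodule.mem_sup.mpr ⟨x', hx', e, ⟨he', he⟩, rfl⟩
  refine ⟨X', ⟨D', hcompl'⟩, ?_, ?_⟩
  · -- (X ⊔ X').map X.mkQ = ⊥ is small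
    have h1 : X ⊔ X' = X := sup_eq_left.mpr hX'leX
    have h2 : (X ⊔ X').map X.mkQ = ⊥ := by
      rw [h1, eq_bot_iff]
      rintro _ ⟨x, hx, rfl⟩
      simpa [Submodule.mem_bot] using (Submodule.Quotient.mk_eq_zero X).mpr hx
    rw [h2]
    intro N hN
    simpa using hN
  · -- (X ⊔ X').map X'.mkQ = X.map X'.mkQ is small in M/X'
    have h1 : X ⊔ X' = X := sup_eq_left.mpr hX'leX
    rw [h1]
    intro N hN
    set L : Submodule R M := N.comap X'.mkQ with hL
    have hNL : L.map X'.mkQ = N :=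
      Submodule.map_comap_eq_of_surjective (Submodule.mkQ_surjective X') N
    have hX'L : X' ≤ L := fun x hx => by
      simp [hL, Submodule.mem_comap, (Submodule.Quotient.mk_eq_zero X').mpr hx,
        Submodule.mkQ_apply]
    have hXL : X ⊔ L = ⊤ := by
      have hmap : (X ⊔ L).map X'.mkQ = ⊤ := by
        rw [Submodule.map_sup, hNL, hN]
      have := congrArg (Submodule.comap X'.mkQ) hmap
      rw [Submodule.comap_map_eq, Submodule.ker_mkQ,
        Submodule.comap_top] at this
      rw [← this]
      exact (sup_eq_left.mpr (le_trans hX'leX le_sup_left)).symm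
    have hXDL : (X ⊓ D') ⊔ L = ⊤ := by
      rw [eq_top_iff, ← hXL]
      refine sup_le (le_trans hXdec (sup_le ?_ le_sup_left)) le_sup_right
      exact le_trans hX'L le_sup_right
    have hmod : (X ⊓ D') ⊔ (L ⊓ D') = D' := by
      rw [← sup_inf_assoc_of_le _ inf_le_right, hXDL, top_inf_eq]
    have hLD' : L ⊓ D' = D' := hsmall (L ⊓ D') inf_le_right hmod
    have hD'L : D' ≤ L := by rw [← hLD']; exact inf_le_left
    have hLtop : L = ⊤ := by
      rw [eq_top_iff, ← hcodisj]
      exact sup_le hX'L hD'L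
    rw [← hNL, hLtop, Submodule.map_top, Submodule.range_mkQ]
end

section
/- Let M be a principally Goldie*-lifting module over a ring R that is distributive (for all submodules A, B, C of M, A ∩ (B + C) = (A ∩ B) + (A ∩ C)). Then every quotient module M/N of M is principally Goldie*-lifting. -/
lemma isSmallSub_map {R M M' : Type*} [Ring R] [AddCommGroup M] [Module R M]
    [AddCommGroup M'] [Module R M'] (f : M →ₗ[R] M') (hf : Function.Surjective f)
    {K : Submodule R M} (hK : IsSmallSub K) : IsSmallSub (K.map f) := by
  intro L hL
  have h0 : ((K ⊔ L.comap f).map f) = ⊤ := by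
    rw [Submodule.map_sup, Submodule.map_comap_eq_of_surjective hf, hL]
  have h2 := congrArg (Submodule.comap f) h0
  rw [Submodule.comap_map_eq, Submodule.comap_top] at h2
  have hker : LinearMap.ker f ≤ L.comap f := by
    intro x hx
    simp [Submodule.mem_comap, LinearMap.mem_ker.mp hx]
  have h3 : K ⊔ L.comap f = ⊤ := by
    rw [← h2, sup_assoc, sup_eq_left.mpr hker]
  have h4 := hK _ h3
  rw [← Submodule.map_comap_eq_of_surjective hf L, h4, Submodule.map_top,
    LinearMap.range_eq_top.mpr hf]

lemma isSmallSub_quot_aux {R M : Type*} [Ring R] [AddCommGroup M] [Module R M]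
    (N A B : Submodule R M)
    (h : IsSmallSub ((A ⊔ B).map A.mkQ)) :
    IsSmallSub (((A.map N.mkQ) ⊔ (B.map N.mkQ)).map (A.map N.mkQ).mkQ) := by
  set Ab := A.map N.mkQ with hAb
  have hle : A ≤ LinearMap.ker (Ab.mkQ ∘ₗ N.mkQ) := by
    intro a ha
    simp only [LinearMap.mem_ker, LinearMap.comp_apply, Submodule.mkQ_apply,
      Submodule.Quotient.mk_eq_zero]
    exact Submodule.mem_map_of_mem ha
  set g := A.liftQ (Ab.mkQ ∘ₗ N.mkQ) hle with hg
  have hgsurj : Function.Surjective g := by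
    intro y
    obtain ⟨z, rfl⟩ := Ab.mkQ_surjective y
    obtain ⟨x, rfl⟩ := N.mkQ_surjective z
    exact ⟨A.mkQ x, rfl⟩
  have key : (Ab ⊔ B.map N.mkQ).map Ab.mkQ = (((A ⊔ B).map A.mkQ).map g) := by
    rw [← Submodule.map_comp, ← Submodule.map_sup]
    have : g ∘ₗ A.mkQ = Ab.mkQ ∘ₗ N.mkQ := Submodule.liftQ_mkQ _ _ _
    rw [this, Submodule.map_comp, Submodule.map_sup]
  rw [key]
  exact isSmallSub_map g hgsurj h

/-- If `M` is principally Goldie*-lifting and distributive, then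
every quotient module of `M` is principally Goldie*-lifting. -/
theorem stmt_10 {R M : Type*} [Ring R] [AddCommGroup M] [Module R M]
    (hM : PrinGStarLifting R M)
    (hdist : ∀ A B C : Submodule R M, A ⊓ (B ⊔ C) = (A ⊓ B) ⊔ (A ⊓ C)) :
    ∀ N : Submodule R M, PrinGStarLifting R (M ⧸ N) := by
  intro N X hX
  obtain ⟨x, rfl⟩ := hX
  obtain ⟨m, rfl⟩ := N.mkQ_surjective x
  obtain ⟨D, ⟨D', hc⟩, h1, h2⟩ := hM (Submodule.span R {m}) ⟨m, rfl⟩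
  have hspan : Submodule.span R {N.mkQ m} = (Submodule.span R {m}).map N.mkQ := by
    rw [Submodule.map_span, Set.image_singleton]
  have hsurj : Function.Surjective N.mkQ := N.mkQ_surjective
  refine ⟨D.map N.mkQ, ⟨D'.map N.mkQ, ?_, ?_⟩, ?_, ?_⟩
  · rw [disjoint_iff]
    have hcomap : Submodule.comap N.mkQ (D.map N.mkQ ⊓ D'.map N.mkQ) = N := by
      rw [Submodule.comap_inf, Submodule.comap_map_eq, Submodule.comap_map_eq,
        Submodule.ker_mkQ]
      have e1 : (D ⊔ N) ⊓ (D' ⊔ N) = ((D ⊔ N) ⊓ D') ⊔ ((D ⊔ N) ⊓ N) := hdist _ _ _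
      have e2 : (D ⊔ N) ⊓ D' = D' ⊓ N := by
        rw [inf_comm, hdist, disjoint_iff.mp hc.disjoint.symm, bot_sup_eq]
      have e3 : (D ⊔ N) ⊓ N = N := inf_eq_right.mpr le_sup_right
      rw [e1, e2, e3, sup_eq_right.mpr inf_le_right]
    have := congrArg (Submodule.map N.mkQ) hcomap
    rw [Submodule.map_comap_eq_of_surjective hsurj] at this
    rw [this]
    exact le_bot_iff.mp (Submodule.map_le_iff_le_comap.mpr
      (by rw [Submodule.comap_bot, Submodule.ker_mkQ]))
  · rw [codisjoint_iff, ← Submodule.map_sup, codisjoint_iff.mp hc.codisjoint,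
      Submodule.map_top, LinearMap.range_eq_top.mpr hsurj]
  · rw [hspan]
    exact isSmallSub_quot_aux N _ _ h1
  · rw [hspan]
    have h2' : IsSmallSub ((D ⊔ Submodule.span R {m}).map D.mkQ) := by
      rwa [sup_comm]
    have := isSmallSub_quot_aux N D (Submodule.span R {m}) h2'
    rwa [sup_comm] at this
end

section
/- Let M be a principally Goldie*-lifting module over a ring R and let N be a projection invariant submodule of M (e(N) ⊆ N for every idempotent R-linear endomorphism e of M). Then M/N is principally Goldie*-lifting. In particular, M/A is principally Goldie*-lifting for every fully invariant submodule A of M. -/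
theorem small_map_aux {R M M₂ : Type*} [Ring R] [AddCommGroup M] [Module R M]
    [AddCommGroup M₂] [Module R M₂] (f : M →ₗ[R] M₂) (hf : Function.Surjective f)
    {K : Submodule R M} (hK : IsSmallSub K) : IsSmallSub (K.map f) := by
  intro L hL
  have h1 : K ⊔ L.comap f = ⊤ := by
    rw [eq_top_iff]
    intro x _
    have hx : f x ∈ K.map f ⊔ L := by rw [hL]; trivial
    obtain ⟨y, hyK, z, hzL, hyz⟩ := Submodule.mem_sup.mp hx
    obtain ⟨k, hk, rfl⟩ := hyK
    refine Submodule.mem_sup.mpr ⟨k, hk, x - k, ?_, by abel⟩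
    have : f (x - k) = z := by rw [map_sub, ← hyz]; abel
    exact Submodule.mem_comap.mpr (this ▸ hzL)
  have h2 : L.comap f = ⊤ := hK _ h1
  rw [← Submodule.map_comap_eq_of_surjective hf L, h2, Submodule.map_top,
    LinearMap.range_eq_top.mpr hf]

theorem small_quot_quot_aux {R M : Type*} [Ring R] [AddCommGroup M] [Module R M]
    (N P S : Submodule R M) (h : IsSmallSub (S.map P.mkQ)) :
    IsSmallSub ((S.map N.mkQ).map (P.map N.mkQ).mkQ) := by
  set Pb := P.map N.mkQ with hPb
  have hle : P ≤ Pb.comap N.mkQ := fun x hx =>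
    Submodule.mem_comap.mpr (Submodule.mem_map_of_mem hx)
  set g : (M ⧸ P) →ₗ[R] (M ⧸ N) ⧸ Pb := P.mapQ Pb N.mkQ hle with hg
  have hcomm : g.comp P.mkQ = Pb.mkQ.comp N.mkQ := by
    ext x; simp [hg, Submodule.mapQ_apply]
  have hgs : Function.Surjective g := by
    intro y
    obtain ⟨x, rfl⟩ := Pb.mkQ_surjective y
    obtain ⟨z, rfl⟩ := N.mkQ_surjective x
    exact ⟨P.mkQ z, congrFun (congrArg (fun (u : M →ₗ[R] (M ⧸ N) ⧸ Pb) => u.toFun) hcomm) z⟩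
  have heq : (S.map N.mkQ).map Pb.mkQ = (S.map P.mkQ).map g := by
    rw [← Submodule.map_comp, ← Submodule.map_comp, hcomm]
  rw [heq]
  exact small_map_aux g hgs h

theorem quot_pgl_aux {R M : Type*} [Ring R] [AddCommGroup M] [Module R M]
    (hM : PrinGStarLifting R M) (N : Submodule R M)
    (hN : ∀ e : M →ₗ[R] M, e ∘ₗ e = e → N.map e ≤ N) :
    PrinGStarLifting R (M ⧸ N) := by
  intro Xb hXb
  obtain ⟨mb, rfl⟩ := hXb
  obtain ⟨m, rfl⟩ := N.mkQ_surjective mb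
  obtain ⟨D, ⟨D', hDD'⟩, hb1, hb2⟩ := hM (Submodule.span R {m}) ⟨m, rfl⟩
  set π := N.mkQ with hπ
  set X : Submodule R M := Submodule.span R {m} with hX
  have hXmap : Submodule.span R {π m} = X.map π := by
    rw [hX, Submodule.map_span, Set.image_singleton]
  -- the projection onto D along D'
  set p := D.linearProjOfIsCompl D' hDD' with hp
  set e : M →ₗ[R] M := D.subtype ∘ₗ p with he
  have heD : ∀ d ∈ D, e d = d := by
    intro d hd
    have : p d = ⟨d, hd⟩ := Submodule.linearProjOfIsCompl_apply_left hDD' ⟨d, hd⟩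
    simp [he, this]
  have heD' : ∀ d ∈ D', e d = 0 := by
    intro d hd
    have : p d = 0 := Submodule.linearProjOfIsCompl_apply_right' hDD' hd
    simp [he, this]
  have hee : e ∘ₗ e = e := by
    apply LinearMap.ext
    intro x
    have hx : e x ∈ D := by simp [he]
    simpa using heD (e x) hx
  have hNe := hN e hee
  refine ⟨D.map π, ⟨D'.map π, ?_, ?_⟩, ?_, ?_⟩
  · -- disjoint
    rw [Submodule.disjoint_def]
    intro x hx1 hx2
    obtain ⟨d, hd, rfl⟩ := hx1
    obtain ⟨d', hd', hdd⟩ := hx2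
    have hmem : d - d' ∈ N := by
      have : π (d - d') = 0 := by rw [map_sub, hdd, sub_self]
      rwa [← N.ker_mkQ, LinearMap.mem_ker]
    have hdN : d ∈ N := by
      have h1 : e (d - d') ∈ N := hNe (Submodule.mem_map_of_mem hmem)
      rwa [map_sub, heD d hd, heD' d' hd', sub_zero] at h1
    show π d = 0
    rwa [hπ, Submodule.mkQ_apply, Submodule.Quotient.mk_eq_zero]
  · -- codisjoint
    rw [codisjoint_iff, ← Submodule.map_sup, codisjoint_iff.mp hDD'.codisjoint,
      Submodule.map_top, Submodule.range_mkQ]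
  · rw [hXmap, ← Submodule.map_sup]
    exact small_quot_quot_aux N X (X ⊔ D) hb1
  · rw [hXmap, ← Submodule.map_sup]
    exact small_quot_quot_aux N D (X ⊔ D) hb2

/-- If `M` is principally Goldie*-lifting and `N` is projection
invariant then `M/N` is principally Goldie*-lifting; in particular `M/A` is
principally Goldie*-lifting for every fully invariant submodule `A`. -/
theorem stmt_11 {R M : Type*} [Ring R] [AddCommGroup M] [Module R M]
    (hM : PrinGStarLifting R M) (N : Submodule R M)
    (hN : ∀ e : M →ₗ[R] M, e ∘ₗ e = e → N.map e ≤ N) :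
    PrinGStarLifting R (M ⧸ N) ∧
      ∀ A : Submodule R M, (∀ f : M →ₗ[R] M, A.map f ≤ A) →
        PrinGStarLifting R (M ⧸ A) := by
  exact ⟨quot_pgl_aux hM N hN, fun A hA => quot_pgl_aux hM A (fun e _ => hA e)⟩
end

section
/- Let M be a principally Goldie*-lifting module over a ring R that is distributive (for all submodules A, B, C of M, A ∩ (B + C) = (A ∩ B) + (A ∩ C)). Then M/Rad(M) is principally semisimple, i.e., every cyclic submodule of M/Rad(M) is a direct summand of M/Rad(M). -/
/-- If `M` is principally Goldie*-lifting and distributive, then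
`M/Rad(M)` is principally semisimple. -/
theorem stmt_13 {R M : Type*} [Ring R] [AddCommGroup M] [Module R M]
    (hM : PrinGStarLifting R M)
    (hdist : ∀ A B C : Submodule R M, A ⊓ (B ⊔ C) = (A ⊓ B) ⊔ (A ⊓ C)) :
    ∀ X : Submodule R (M ⧸ RadSub R M), IsCyclicSub X → IsDirectSummand X := by
  intro Xbar hXbar
  obtain ⟨mbar, rfl⟩ := hXbar
  obtain ⟨m, rfl⟩ := (RadSub R M).mkQ_surjective mbar
  set Rad := RadSub R M with hRad
  set X : Submodule R M := Submodule.span R {m} with hX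
  obtain ⟨D, ⟨D', hcompl⟩, hβ1, hβ2⟩ := hM X ⟨m, rfl⟩
  -- Step 1 : X ⊔ D' = ⊤
  have hsup : X ⊔ D' = ⊤ := by
    have htot : (X ⊔ D) ⊔ (X ⊔ D') = ⊤ := by
      rw [sup_sup_sup_comm, sup_idem, ← top_le_iff]
      calc (⊤ : Submodule R M) = D ⊔ D' := hcompl.sup_eq_top.symm
        _ ≤ X ⊔ (D ⊔ D') := le_sup_right
    have h1 : Submodule.map X.mkQ (X ⊔ D) ⊔ Submodule.map X.mkQ (X ⊔ D') = ⊤ := by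
      rw [← Submodule.map_sup, htot, Submodule.map_top, Submodule.range_mkQ]
    have h2 := hβ1 _ h1
    have h3 := congrArg (Submodule.comap X.mkQ) h2
    rw [Submodule.comap_map_mkQ, Submodule.comap_top, ← sup_assoc, sup_idem] at h3
    exact h3
  -- Step 2 : X ⊓ D' ≤ Rad
  have hkey : X ⊓ D' ≤ Rad := by
    rw [hRad]
    refine le_sInf fun N hN => ?_
    by_contra hnle
    have htop : (X ⊓ D') ⊔ N = ⊤ := hN.2 _ (right_lt_sup.mpr hnle)
    have hXDN : (X ⊔ D) ⊔ (D ⊔ N) = ⊤ := by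
      rw [← top_le_iff, ← htop]
      exact sup_le (inf_le_left.trans (le_sup_left.trans le_sup_left))
        (le_sup_right.trans le_sup_right)
    have h1 : Submodule.map D.mkQ (X ⊔ D) ⊔ Submodule.map D.mkQ (D ⊔ N) = ⊤ := by
      rw [← Submodule.map_sup, hXDN, Submodule.map_top, Submodule.range_mkQ]
    have h2 := hβ2 _ h1
    have h3 := congrArg (Submodule.comap D.mkQ) h2
    rw [Submodule.comap_map_mkQ, Submodule.comap_top, ← sup_assoc, sup_idem] at h3
    -- h3 : D ⊔ N = ⊤
    have hD'N : D' ≤ N := by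
      have hd := hdist D' D N
      rw [h3, inf_top_eq, disjoint_iff.mp hcompl.symm.disjoint, bot_sup_eq] at hd
      exact hd.le.trans inf_le_right
    exact hnle (inf_le_right.trans hD'N)
  -- Assemble
  have hspan : Submodule.span R {Rad.mkQ m} = Submodule.map Rad.mkQ X := by
    rw [hX, Submodule.map_span, Set.image_singleton]
  rw [hspan]
  refine ⟨Submodule.map Rad.mkQ D', disjoint_iff.mpr ?_, codisjoint_iff.mpr ?_⟩
  · rw [eq_bot_iff]
    rintro y ⟨hy1, hy2⟩
    obtain ⟨a, haX, rfl⟩ := hy1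
    obtain ⟨b, hbD', hba⟩ := hy2
    have hab : a - b ∈ Rad := (Submodule.Quotient.eq Rad).mp (by simpa using hba.symm)
    have haDR : a ∈ D' ⊔ Rad := by
      have : a = b + (a - b) := by abel
      rw [this]
      exact Submodule.add_mem_sup hbD' hab
    have haRad : a ∈ Rad := by
      have h := hdist X D' Rad
      have hmem : a ∈ X ⊓ (D' ⊔ Rad) := ⟨haX, haDR⟩
      rw [h] at hmem
      exact sup_le hkey inf_le_right hmem
    simpa [Submodule.Quotient.mk_eq_zero] using
      (Submodule.Quotient.mk_eq_zero Rad).mpr haRad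
  · rw [← Submodule.map_sup, hsup, Submodule.map_top, Submodule.range_mkQ]
end

section
/- Let M be a principally Goldie*-lifting module over a ring R such that Rad(M) is small in M. Then M/Rad(M) is principally semisimple, i.e., every cyclic submodule of M/Rad(M) is a direct summand of M/Rad(M). -/
open Submodule

/-- Any linear map sends the radical into the radical. -/
theorem map_rad_le {R M N : Type*} [Ring R] [AddCommGroup M] [Module R M]
    [AddCommGroup N] [Module R N] (f : M →ₗ[R] N) :
    (RadSub R M).map f ≤ RadSub R N := by
  refine le_sInf (α := Submodule R N) fun C hC => ?_
  rw [Submodule.map_le_iff_le_comap]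
  by_cases htop : Submodule.comap f C = ⊤
  · rw [htop]; exact le_top
  · refine sInf_le (show IsCoatom _ from ⟨htop, fun B hB => ?_⟩)
    obtain ⟨x, hxB, hx⟩ := SetLike.exists_of_lt hB
    have hfx : f x ∉ C := hx
    have hsup : C ⊔ Submodule.span R {f x} = ⊤ := by
      refine hC.2 _ (lt_of_le_of_ne le_sup_left fun h => hfx ?_)
      rw [h]
      exact Submodule.mem_sup_right (Submodule.mem_span_singleton_self _)
    rw [eq_top_iff]
    intro y _
    have : f y ∈ C ⊔ Submodule.span R {f x} := hsup ▸ Submodule.mem_top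
    obtain ⟨c, hc, s, hs, hcs⟩ := Submodule.mem_sup.1 this
    obtain ⟨r, rfl⟩ := Submodule.mem_span_singleton.1 hs
    have hyr : y - r • x ∈ Submodule.comap f C := by
      simp only [Submodule.mem_comap, map_sub, map_smul]
      have : f y - r • f x = c := by rw [← hcs]; abel
      rw [this]; exact hc
    have : y = (y - r • x) + r • x := by abel
    rw [this]
    exact B.add_mem (hB.le hyr) (B.smul_mem r hxB)

/-- A small submodule is contained in the radical. -/
theorem small_le_rad {R M : Type*} [Ring R] [AddCommGroup M] [Module R M]
    {K : Submodule R M} (h : IsSmallSub K) : K ≤ RadSub R M := by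
  refine le_sInf fun N hN => ?_
  by_contra hKN
  have hlt : N < K ⊔ N := lt_of_le_of_ne le_sup_right fun he => hKN (he ▸ le_sup_left)
  exact hN.1 (h N (hN.2 _ hlt))

/-- For a direct summand `D`, the radical of `M ⧸ D` is the image of the radical. -/
theorem rad_quot_le {R M : Type*} [Ring R] [AddCommGroup M] [Module R M]
    {D D' : Submodule R M} (h : IsCompl D D') :
    RadSub R (M ⧸ D) ≤ (RadSub R M).map D.mkQ := by
  have hinj : Function.Injective (D.mkQ ∘ₗ D'.subtype) := by
    rw [← LinearMap.ker_eq_bot, LinearMap.ker_comp, Submodule.ker_mkQ]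
    rw [Submodule.eq_bot_iff]
    rintro ⟨x, hx'⟩ hx
    have : x ∈ D := hx
    have : x = 0 := (Submodule.disjoint_def.1 h.disjoint) x this hx'
    exact Subtype.ext this
  have hsurj : Function.Surjective (D.mkQ ∘ₗ D'.subtype) := by
    intro z
    obtain ⟨m, rfl⟩ := D.mkQ_surjective z
    have : m ∈ D ⊔ D' := h.codisjoint.eq_top ▸ Submodule.mem_top
    obtain ⟨d, hd, d', hd', rfl⟩ := Submodule.mem_sup.1 this
    refine ⟨⟨d', hd'⟩, ?_⟩
    show D.mkQ d' = Submodule.Quotient.mk (d + d')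
    rw [Submodule.mkQ_apply]
    exact (Submodule.Quotient.eq D).2 (by simpa using D.neg_mem hd)
  let e : D' ≃ₗ[R] M ⧸ D := LinearEquiv.ofBijective _ ⟨hinj, hsurj⟩
  let j : (M ⧸ D) →ₗ[R] M := D'.subtype ∘ₗ (e.symm : (M ⧸ D) →ₗ[R] D')
  have hj : ∀ z : M ⧸ D, D.mkQ (j z) = z := by
    intro z
    have : D.mkQ (j z) = (D.mkQ ∘ₗ D'.subtype) (e.symm z) := rfl
    rw [this]
    exact e.apply_symm_apply z
  calc RadSub R (M ⧸ D) = ((RadSub R (M ⧸ D)).map j).map D.mkQ := by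
        rw [← Submodule.map_comp]
        have : (D.mkQ ∘ₗ j) = LinearMap.id := LinearMap.ext hj
        rw [this, Submodule.map_id]
    _ ≤ (RadSub R M).map D.mkQ := Submodule.map_mono (map_rad_le j)

/-- For complements `D, D'`, `(D ⊔ Rad) ⊓ (D' ⊔ Rad) ≤ Rad`. -/
theorem inf_sup_rad_le {R M : Type*} [Ring R] [AddCommGroup M] [Module R M]
    {D D' : Submodule R M} (h : IsCompl D D') :
    (D ⊔ RadSub R M) ⊓ (D' ⊔ RadSub R M) ≤ RadSub R M := by
  set Rad := RadSub R M
  have hdec : Rad ≤ (Rad ⊓ D) ⊔ (Rad ⊓ D') := by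
    intro r hr
    set p : M →ₗ[R] M := D.subtype ∘ₗ D.linearProjOfIsCompl D' h
    set q : M →ₗ[R] M := D'.subtype ∘ₗ D'.linearProjOfIsCompl D h.symm
    have hpq : p r + q r = r := Submodule.projection_add_projection_eq_self h r
    refine hpq ▸ Submodule.add_mem_sup ?_ ?_
    · exact ⟨map_rad_le p ⟨r, hr, rfl⟩, (D.linearProjOfIsCompl D' h r).2⟩
    · exact ⟨map_rad_le q ⟨r, hr, rfl⟩, (D'.linearProjOfIsCompl D h.symm r).2⟩
  intro z hz
  obtain ⟨hz1, hz2⟩ := Submodule.mem_inf.1 hz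
  have hz1' : z ∈ D ⊔ (Rad ⊓ D') := by
    refine (sup_le le_sup_left (le_trans hdec (sup_le ?_ le_sup_right)) : D ⊔ Rad ≤ _) hz1
    exact le_trans inf_le_right le_sup_left
  have hz2' : z ∈ D' ⊔ (Rad ⊓ D) := by
    refine (sup_le le_sup_left (le_trans hdec (sup_le ?_ ?_)) : D' ⊔ Rad ≤ _) hz2
    · exact le_sup_right
    · exact le_trans inf_le_right le_sup_left
  obtain ⟨d, hd, r1, hr1, hzeq1⟩ := Submodule.mem_sup.1 hz1'
  obtain ⟨d', hd', r2, hr2, hzeq2⟩ := Submodule.mem_sup.1 hz2'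
  have hdiff : d - r2 = d' - r1 := by
    rw [sub_eq_sub_iff_add_eq_add]
    rw [hzeq1, hzeq2]
  have hD : d - r2 ∈ D := D.sub_mem hd hr2.2
  have hD' : d - r2 ∈ D' := hdiff ▸ D'.sub_mem hd' hr1.2
  have h0 : d - r2 = 0 := (Submodule.disjoint_def.1 h.disjoint) _ hD hD'
  have hd_eq : d = r2 := sub_eq_zero.1 h0
  have : z = r2 + r1 := by rw [← hzeq1, hd_eq]
  rw [this]
  exact Rad.add_mem hr2.1 hr1.1

/-- If `M` is principally Goldie*-lifting and `Rad(M)` is small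
in `M`, then `M/Rad(M)` is principally semisimple. -/
theorem stmt_14 {R M : Type*} [Ring R] [AddCommGroup M] [Module R M]
    (hM : PrinGStarLifting R M) (hrad : IsSmallSub (RadSub R M)) :
    ∀ X : Submodule R (M ⧸ RadSub R M), IsCyclicSub X → IsDirectSummand X := by
  set Rad := RadSub R M with hRadDef
  intro X hX
  obtain ⟨x, rfl⟩ := hX
  obtain ⟨m, hm⟩ := Rad.mkQ_surjective x
  obtain ⟨D, ⟨D', hcompl⟩, hb1, hb2⟩ := hM (Submodule.span R {m}) ⟨m, rfl⟩
  set X₀ := Submodule.span R {m} with hX0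
  -- Step 1 : X₀ ≤ D ⊔ Rad
  have h1 : X₀ ≤ D ⊔ Rad := by
    have hsmall : ((X₀ ⊔ D).map D.mkQ) ≤ Rad.map D.mkQ :=
      le_trans (small_le_rad hb2) (rad_quot_le hcompl)
    have hle : X₀ ≤ Submodule.comap D.mkQ ((X₀ ⊔ D).map D.mkQ) :=
      le_trans le_sup_left (Submodule.le_comap_map _ _)
    refine le_trans hle (le_trans (Submodule.comap_mono hsmall) ?_)
    rw [Submodule.comap_map_mkQ]
  -- Step 2 : X₀ ⊔ D' = ⊤
  have h2 : X₀ ⊔ D' = ⊤ := by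
    have htop : ((X₀ ⊔ D).map X₀.mkQ) ⊔ (D'.map X₀.mkQ) = ⊤ := by
      rw [← Submodule.map_sup, sup_assoc, hcompl.codisjoint.eq_top, sup_top_eq,
        Submodule.map_top, Submodule.range_mkQ]
    have h' := congrArg (Submodule.comap X₀.mkQ) (hb1 _ htop)
    rw [Submodule.comap_map_mkQ, Submodule.comap_top] at h'
    exact h'
  have hXeq : X₀.map Rad.mkQ = Submodule.span R {x} := by
    rw [Submodule.map_span, Set.image_singleton, hm]
  refine ⟨D'.map Rad.mkQ, ?_, ?_⟩
  · -- Disjointness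
    rw [Submodule.disjoint_def]
    intro z hzX hzD'
    rw [← hXeq] at hzX
    obtain ⟨a, ha, rfl⟩ := Submodule.mem_map.1 hzX
    obtain ⟨b, hb, hab⟩ := Submodule.mem_map.1 hzD'
    have hr : a - b ∈ Rad := by
      rw [← Submodule.Quotient.eq Rad]
      rw [Submodule.mkQ_apply] at hab
      exact (hab.symm : Submodule.Quotient.mk a = Submodule.Quotient.mk b) ▸ hab.symm
    have haD : a ∈ (D ⊔ Rad) ⊓ (D' ⊔ Rad) := by
      rw [Submodule.mem_inf]
      refine ⟨h1 ha, ?_⟩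
      have : a = b + (a - b) := by abel
      rw [this]
      exact Submodule.add_mem_sup hb hr
    have haRad : a ∈ Rad := inf_sup_rad_le hcompl haD
    rw [Submodule.mkQ_apply, Submodule.Quotient.mk_eq_zero]
    exact haRad
  · -- Codisjointness
    rw [codisjoint_iff, ← hXeq, ← Submodule.map_sup, h2, Submodule.map_top,
      Submodule.range_mkQ]
end

section
/- Let M be a π-projective module over a ring R (for all submodules U, V of M with U + V = M there exists an R-linear endomorphism f of M with f(M) ⊆ U and (id − f)(M) ⊆ V). Then the following are equivalent: (a) M is principally lifting; (b) M is principally Goldie*-lifting; (c) M is ⊕-principally supplemented. -/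
section helpers

variable {R M : Type*} [Ring R] [AddCommGroup M] [Module R M]

/-- image of a small submodule under `mkQ` is small -/
lemma small_map_mkQ {K D : Submodule R M}
    (hK : ∀ N : Submodule R M, K ⊔ N = ⊤ → N = ⊤) :
    ∀ N : Submodule R (M ⧸ D), K.map D.mkQ ⊔ N = ⊤ → N = ⊤ := by
  intro N hN
  have hc : K ⊔ N.comap D.mkQ = ⊤ := by
    rw [eq_top_iff]
    intro m _
    have hm : D.mkQ m ∈ K.map D.mkQ ⊔ N := by rw [hN]; trivial
    rcases Submodule.mem_sup.1 hm with ⟨x, hx, y, hy, hxy⟩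
    rcases hx with ⟨k, hk, rfl⟩
    have hmk : m - k ∈ N.comap D.mkQ := by
      simp only [Submodule.mem_comap, map_sub]
      rw [show D.mkQ m - D.mkQ k = y by rw [← hxy]; abel]
      exact hy
    have hmeq : m = k + (m - k) := by abel
    rw [hmeq]
    exact Submodule.add_mem_sup hk hmk
  have h1 := hK _ hc
  have h2 : N = Submodule.map D.mkQ (N.comap D.mkQ) :=
    (Submodule.map_comap_eq_of_surjective (Submodule.mkQ_surjective D) N).symm
  rw [h2, h1, Submodule.map_top, Submodule.range_mkQ]

variable (R M) in
abbrev PrinLift : Prop := ∀ X : Submodule R M, (∃ m : M, X = Submodule.span R {m}) →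
  ∃ D D' : Submodule R M, IsCompl D D' ∧ D ≤ X ∧
    (∀ N : Submodule R M, (X ⊓ D') ⊔ N = ⊤ → N = ⊤)

variable (R M) in
abbrev PrinGStar : Prop := ∀ X : Submodule R M, (∃ m : M, X = Submodule.span R {m}) →
  ∃ D : Submodule R M, (∃ D' : Submodule R M, IsCompl D D') ∧
    ((∀ N, ((X ⊔ D).map X.mkQ) ⊔ N = ⊤ → N = ⊤) ∧
     (∀ N, ((X ⊔ D).map D.mkQ) ⊔ N = ⊤ → N = ⊤))

variable (R M) in
abbrev PrinSuppl : Prop := ∀ X : Submodule R M, (∃ m : M, X = Submodule.span R {m}) →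
  ∃ D : Submodule R M, (∃ D' : Submodule R M, IsCompl D D') ∧ D ⊔ X = ⊤ ∧
    (∀ L : Submodule R M, L ≤ D → (D ⊓ X) ⊔ L = D → L = D)

lemma impl_ab : PrinLift R M → PrinGStar R M := by
  intro ha X hX
  obtain ⟨D, D', hcompl, hDX, hsm⟩ := ha X hX
  refine ⟨D, ⟨D', hcompl⟩, ?_, ?_⟩
  · intro N hN
    rw [sup_eq_left.mpr hDX, Submodule.mkQ_map_self, bot_sup_eq] at hN
    exact hN
  · have hXdecomp : X = D ⊔ (X ⊓ D') := by
      have h := sup_inf_assoc_of_le (y := D') hDX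
      rw [hcompl.sup_eq_top, top_inf_eq, inf_comm D' X] at h
      exact h
    intro N hN
    rw [sup_eq_left.mpr hDX] at hN
    have heq : Submodule.map D.mkQ X = Submodule.map D.mkQ (X ⊓ D') := by
      conv_lhs => rw [hXdecomp]
      rw [Submodule.map_sup, Submodule.mkQ_map_self, bot_sup_eq]
    rw [heq] at hN
    exact small_map_mkQ hsm N hN

lemma impl_bc : PrinGStar R M → PrinSuppl R M := by
  intro hb X hX
  obtain ⟨D, ⟨D', hcompl⟩, h1, h2⟩ := hb X hX
  refine ⟨D', ⟨D, hcompl.symm⟩, ?_, ?_⟩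
  · -- D' ⊔ X = ⊤
    have hmt : (X ⊔ D).map X.mkQ ⊔ D'.map X.mkQ = ⊤ := by
      rw [← Submodule.map_sup,
        show X ⊔ D ⊔ D' = ⊤ by rw [sup_assoc, hcompl.sup_eq_top, sup_top_eq],
        Submodule.map_top, Submodule.range_mkQ]
    have h := h1 _ hmt
    rw [Submodule.map_mkQ_eq_top] at h
    rw [sup_comm]; exact h
  · intro L hL hsupL
    have hD'le : D' ≤ X ⊔ D ⊔ L := by
      rw [← hsupL]
      apply sup_le
      · exact le_trans inf_le_right (le_sup_of_le_left le_sup_left)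
      · exact le_sup_right
    have hXDL : X ⊔ D ⊔ L = ⊤ := by
      rw [eq_top_iff, ← hcompl.sup_eq_top]
      exact sup_le (le_sup_of_le_left le_sup_right) hD'le
    have hmap : (X ⊔ D).map D.mkQ ⊔ L.map D.mkQ = ⊤ := by
      rw [← Submodule.map_sup, hXDL, Submodule.map_top, Submodule.range_mkQ]
    have hDL' := h2 _ hmap
    rw [Submodule.map_mkQ_eq_top] at hDL'
    have hDL : L ⊔ D = ⊤ := by rw [sup_comm]; exact hDL'
    have hmod := sup_inf_assoc_of_le (y := D) hL
    rw [hDL, top_inf_eq, hcompl.inf_eq_bot, sup_bot_eq] at hmod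
    exact hmod.symm

lemma impl_ca
    (hpi : ∀ U V : Submodule R M, U ⊔ V = ⊤ →
      ∃ f : M →ₗ[R] M, LinearMap.range f ≤ U ∧
        LinearMap.range (LinearMap.id - f) ≤ V) :
    PrinSuppl R M → PrinLift R M := by
  intro hc X hX
  obtain ⟨D, ⟨D'', hcompl⟩, hsum, hsm⟩ := hc X hX
  obtain ⟨f, hf, hg⟩ := hpi X D (by rw [sup_comm]; exact hsum)
  have hsub : ∀ m : M, m - f m ∈ D := by
    intro m
    exact hg ⟨m, by simp⟩
  set A : Submodule R M := D''.map f with hA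
  have hfD : ∀ d ∈ D, f d ∈ D := by
    intro d hd
    have h : f d = d - (d - f d) := by abel
    rw [h]
    exact D.sub_mem hd (hsub d)
  have hAX : A ≤ X := by
    rintro x ⟨d'', _, rfl⟩; exact hf ⟨d'', rfl⟩
  have hAD_sup : A ⊔ D = ⊤ := by
    rw [eq_top_iff]
    intro m _
    have hm : m ∈ D ⊔ D'' := by rw [hcompl.sup_eq_top]; trivial
    rcases Submodule.mem_sup.1 hm with ⟨d, hd, d'', hd'', rfl⟩
    have key : d + d'' = f d'' + (f d + ((d + d'') - f (d + d''))) := by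
      rw [map_add]; abel
    rw [key]
    exact Submodule.add_mem_sup ⟨d'', hd'', rfl⟩
      (D.add_mem (hfD d hd) (hsub (d + d'')))
  have hAD_inf : A ⊓ D = ⊥ := by
    rw [eq_bot_iff]
    rintro x ⟨⟨d'', hd'', rfl⟩, hxD⟩
    have hd''D : d'' ∈ D := by
      have h : d'' = f d'' + (d'' - f d'') := by abel
      rw [h]
      exact D.add_mem hxD (hsub d'')
    have hz : d'' = 0 := by
      have := hcompl.disjoint.le_bot (Submodule.mem_inf.2 ⟨hd''D, hd''⟩)
      simpa using this
    simp [hz]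
  have hsmall : ∀ N : Submodule R M, (X ⊓ D) ⊔ N = ⊤ → N = ⊤ := by
    intro N hN
    rw [inf_comm X D] at hN
    have hmod : (D ⊓ X) ⊔ (D ⊓ N) = D := by
      have h1 := sup_inf_assoc_of_le (y := N) (inf_le_left : D ⊓ X ≤ D)
      rw [hN, top_inf_eq, inf_comm N D] at h1
      exact h1.symm
    have hDN' := hsm (D ⊓ N) inf_le_left hmod
    have hDN : D ≤ N := by rw [← hDN']; exact inf_le_right
    rw [eq_top_iff, ← hN]
    exact sup_le (le_trans inf_le_left hDN) le_rfl
  exact ⟨A, D, IsCompl.of_eq hAD_inf hAD_sup, hAX, hsmall⟩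

end helpers

/-- For a π-projective module `M` the following are equivalent:
(a) principally lifting, (b) principally Goldie*-lifting,
(c) ⊕-principally supplemented. -/
theorem stmt_16 {R M : Type*} [Ring R] [AddCommGroup M] [Module R M]
    (hpi : ∀ U V : Submodule R M, U ⊔ V = ⊤ →
      ∃ f : M →ₗ[R] M, LinearMap.range f ≤ U ∧
        LinearMap.range (LinearMap.id - f) ≤ V) :
    ((∀ X : Submodule R M, IsCyclicSub X →
        ∃ D D' : Submodule R M, IsCompl D D' ∧ D ≤ X ∧ IsSmallSub (X ⊓ D')) ↔
      PrinGStarLifting R M) ∧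
    (PrinGStarLifting R M ↔
      (∀ X : Submodule R M, IsCyclicSub X →
        ∃ D : Submodule R M, IsDirectSummand D ∧ D ⊔ X = ⊤ ∧
          IsSmallIn (D ⊓ X) D)) := by
  have ea : (∀ X : Submodule R M, IsCyclicSub X →
      ∃ D D' : Submodule R M, IsCompl D D' ∧ D ≤ X ∧ IsSmallSub (X ⊓ D')) ↔ PrinLift R M :=
    Iff.rfl
  have eb : PrinGStarLifting R M ↔ PrinGStar R M := Iff.rfl
  have ec : (∀ X : Submodule R M, IsCyclicSub X →
      ∃ D : Submodule R M, IsDirectSummand D ∧ D ⊔ X = ⊤ ∧ IsSmallIn (D ⊓ X) D) ↔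
      PrinSuppl R M := Iff.rfl
  rw [ea, eb, ec]
  exact ⟨⟨impl_ab, fun hb => impl_ca hpi (impl_bc hb)⟩,
    ⟨impl_bc, fun hc => impl_ab (impl_ca hpi hc)⟩⟩
end

section
/- Let M be a π-projective module over a ring R (for all submodules U, V of M with U + V = M there exists an R-linear endomorphism f of M with f(M) ⊆ U and (id − f)(M) ⊆ V). Then M is principally Goldie*-lifting if and only if every cyclic submodule X of M can be written as X = D ⊕ A where D is a direct summand of M and A is small in M. -/
section Aux

variable {R M : Type*} [Ring R] [AddCommGroup M] [Module R M]

lemma isSmallSub_mono {A B : Submodule R M} (h : A ≤ B) (hB : IsSmallSub B) :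
    IsSmallSub A := fun N hN =>
  hB N (top_unique (hN ▸ sup_le_sup_right h N))

/-- If `A ≤ D'` and `A` is small in `D'`, then `A` is small in `M`. -/
lemma isSmallSub_of_isSmallIn {A D' : Submodule R M} (hA : A ≤ D')
    (h : ∀ L : Submodule R M, L ≤ D' → A ⊔ L = D' → L = D') : IsSmallSub A := by
  intro N hN
  have h1 : (A ⊔ N) ⊓ D' = A ⊔ N ⊓ D' := sup_inf_assoc_of_le N hA
  rw [hN, top_inf_eq] at h1
  have h2 := h (N ⊓ D') inf_le_right h1.symm
  have hD'N : D' ≤ N := h2 ▸ inf_le_left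
  exact (sup_eq_right.2 (hA.trans hD'N)).symm.trans hN

/-- The image of a small submodule under a quotient map is small. -/
lemma isSmallSub_map_mkQ {A : Submodule R M} (p : Submodule R M) (hA : IsSmallSub A) :
    IsSmallSub (A.map p.mkQ) := by
  intro N hN
  set N' := N.comap p.mkQ with hN'
  have hmapN' : N'.map p.mkQ = N := Submodule.map_comap_eq_of_surjective p.mkQ_surjective N
  have hsup : (A ⊔ N').map p.mkQ = ⊤ := by
    rw [Submodule.map_sup, hmapN', hN]
  have : p ⊔ (A ⊔ N') = ⊤ := by
    rw [← Submodule.comap_map_mkQ, hsup, Submodule.comap_top]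
  have hpN' : p ≤ N' := by
    rw [hN']; intro x hx
    simp [Submodule.mem_comap, (Submodule.Quotient.mk_eq_zero p).2 hx]
  have hAN' : A ⊔ N' = ⊤ :=
    (sup_eq_right.2 ((hpN'.trans le_sup_right) : p ≤ A ⊔ N')).symm.trans this
  have := hA N' hAN'
  rw [← hmapN', this, Submodule.map_top, Submodule.range_mkQ]

/-- `X ⊔ N = ⊤` from smallness of `(X ⊔ D).map X.mkQ` and `(X ⊔ D) ⊔ N = ⊤`, `X ≤ N`. -/
lemma sup_eq_top_of_small_map {X D N : Submodule R M}
    (hsmall : IsSmallSub ((X ⊔ D).map X.mkQ)) (hX : X ≤ N)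
    (htop : (X ⊔ D) ⊔ N = ⊤) : N = ⊤ := by
  have h1 : (X ⊔ D).map X.mkQ ⊔ N.map X.mkQ = ⊤ := by
    rw [← Submodule.map_sup, htop, Submodule.map_top, Submodule.range_mkQ]
  have h2 := hsmall _ h1
  have h3 : X ⊔ N = ⊤ := by
    rw [← Submodule.comap_map_mkQ X N, h2, Submodule.comap_top]
  rwa [sup_eq_right.2 hX] at h3

end Aux

/-- A π-projective module `M` is principally Goldie*-lifting iff
every cyclic submodule `X` of `M` decomposes as `X = D ⊕ A` with `D` a direct
summand of `M` and `A` small in `M`. -/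
theorem stmt_17 {R M : Type*} [Ring R] [AddCommGroup M] [Module R M]
    (hpi : ∀ U V : Submodule R M, U ⊔ V = ⊤ →
      ∃ f : M →ₗ[R] M, LinearMap.range f ≤ U ∧
        LinearMap.range (LinearMap.id - f) ≤ V) :
    PrinGStarLifting R M ↔
      ∀ X : Submodule R M, IsCyclicSub X →
        ∃ D A : Submodule R M, IsDirectSummand D ∧ IsSmallSub A ∧
          D ⊓ A = ⊥ ∧ D ⊔ A = X := by
  constructor
  · -- Forward direction
    intro h X hX
    obtain ⟨D, ⟨D', hcompl⟩, hb1, hb2⟩ := h X hX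
    have hDD' : D ⊔ D' = ⊤ := hcompl.sup_eq_top
    have hDD'bot : D ⊓ D' = ⊥ := hcompl.inf_eq_bot
    -- Step 1 : X ⊔ D' = ⊤
    have hXD' : X ⊔ D' = ⊤ := by
      apply sup_eq_top_of_small_map hb1 le_sup_left
      rw [eq_top_iff, ← hDD']
      exact sup_le ((le_sup_right : D ≤ X ⊔ D).trans le_sup_left)
        ((le_sup_right : D' ≤ X ⊔ D').trans le_sup_right)
    -- Step 2 : π-projectivity
    obtain ⟨f, hf1, hf2⟩ := hpi X D' hXD'
    set D₀ : Submodule R M := D.map f with hD₀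
    have hfX : ∀ m : M, f m ∈ X := fun m => hf1 ⟨m, rfl⟩
    have hfD' : ∀ m : M, m - f m ∈ D' := fun m => by
      have h := hf2 (LinearMap.mem_range_self _ m)
      simpa using h
    have hD₀X : D₀ ≤ X := by
      rintro _ ⟨d, _, rfl⟩; exact hfX d
    -- D₀ ⊓ D' = ⊥
    have hD₀D'bot : D₀ ⊓ D' = ⊥ := by
      rw [eq_bot_iff]
      rintro y ⟨hy1, hy2⟩
      obtain ⟨d, hd, rfl⟩ := hy1
      have hdD' : d ∈ D' := by
        have : d = f d + (d - f d) := by abel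
        rw [this]
        exact D'.add_mem hy2 (hfD' d)
      have : d ∈ D ⊓ D' := ⟨hd, hdD'⟩
      rw [hDD'bot] at this
      simp only [Submodule.mem_bot] at this
      simp [this]
    -- D₀ ⊔ D' = ⊤
    have hD₀D'top : D₀ ⊔ D' = ⊤ := by
      rw [eq_top_iff]
      intro m _
      obtain ⟨d, hd, d', hd', hsum⟩ : ∃ d ∈ D, ∃ d' ∈ D', d + d' = m := by
        have : m ∈ D ⊔ D' := hDD' ▸ Submodule.mem_top
        rw [Submodule.mem_sup] at this
        obtain ⟨d, hd, d', hd', hs⟩ := this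
        exact ⟨d, hd, d', hd', hs⟩
      have h1 : f d ∈ D₀ := Submodule.mem_map_of_mem hd
      have h2 : m - f d ∈ D' := by
        have e1 : m - f d = (m - f m) + f d' := by
          rw [← hsum]; rw [map_add]; abel
        have e2 : f d' ∈ D' := by
          have : f d' = d' - (d' - f d') := by abel
          rw [this]; exact D'.sub_mem hd' (hfD' d')
        rw [e1]; exact D'.add_mem (hfD' m) e2
      have : m = f d + (m - f d) := by abel
      rw [this]
      exact Submodule.add_mem_sup h1 h2
    have hcompl' : IsCompl D₀ D' :=
      ⟨disjoint_iff.2 hD₀D'bot, codisjoint_iff.2 hD₀D'top⟩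
    -- X = D₀ ⊔ (X ⊓ D')
    have hXdec : D₀ ⊔ X ⊓ D' = X := by
      have := sup_inf_assoc_of_le D' hD₀X
      rw [hD₀D'top, top_inf_eq] at this
      rw [inf_comm X D']
      exact this.symm
    -- A := X ⊓ D' is small in D', hence in M
    have hAsmall : IsSmallSub (X ⊓ D') := by
      apply isSmallSub_of_isSmallIn inf_le_right
      intro L hL hsupL
      -- first show D ⊔ L = ⊤
      have hDL : D ⊔ L = ⊤ := by
        apply sup_eq_top_of_small_map (X := D) (D := X) (N := D ⊔ L)
        · rwa [sup_comm D X]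
        · exact le_sup_left
        · rw [eq_top_iff, ← hDD']
          intro m hm
          rw [Submodule.mem_sup] at hm
          obtain ⟨d, hd, d', hd', rfl⟩ := hm
          rw [← hsupL, Submodule.mem_sup] at hd'
          obtain ⟨a, ha, l, hl', rfl⟩ := hd'
          have h1 : d + a ∈ (D ⊔ X) ⊔ (D ⊔ L) :=
            le_sup_left (α := Submodule R M)
              (Submodule.add_mem_sup hd ha.1)
          have h2 : l ∈ (D ⊔ X) ⊔ (D ⊔ L) :=
            le_sup_right (α := Submodule R M) (le_sup_right (α := Submodule R M) hl')
          have := Submodule.add_mem _ h1 h2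
          rwa [add_assoc] at this
      -- then L = D' by modularity
      have hmod : (L ⊔ D) ⊓ D' = L ⊔ D ⊓ D' := sup_inf_assoc_of_le D hL
      rw [sup_comm L D, hDL, top_inf_eq, hDD'bot, sup_bot_eq] at hmod
      exact hmod.symm
    refine ⟨D₀, X ⊓ D', ⟨D', hcompl'⟩, hAsmall, ?_, hXdec⟩
    rw [eq_bot_iff, ← hD₀D'bot]
    exact inf_le_inf_left _ inf_le_right
  · -- Backward direction
    intro h X hX
    obtain ⟨D, A, hDsummand, hAsmall, hbot, hsup⟩ := h X hX
    refine ⟨D, hDsummand, ?_, ?_⟩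
    · -- (X ⊔ D).map X.mkQ is small in M/X : it is ⊥
      have hDX : D ≤ X := hsup ▸ le_sup_left
      have : (X ⊔ D).map X.mkQ = ⊥ := by
        rw [sup_eq_left.2 hDX, eq_bot_iff]
        rintro _ ⟨x, hx, rfl⟩
        simpa using (Submodule.Quotient.mk_eq_zero X).2 hx
      rw [this]
      intro N hN
      simpa using hN
    · -- (X ⊔ D).map D.mkQ = A.map D.mkQ is small
      have hDX : D ≤ X := hsup ▸ le_sup_left
      have hXA : X ⊔ D = D ⊔ A := by rw [sup_eq_left.2 hDX, ← hsup]
      have hDbot : D.map D.mkQ = ⊥ := by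
        rw [eq_bot_iff]
        rintro _ ⟨x, hx, rfl⟩
        simpa using (Submodule.Quotient.mk_eq_zero D).2 hx
      have : (X ⊔ D).map D.mkQ = A.map D.mkQ := by
        rw [hXA, Submodule.map_sup, hDbot, bot_sup_eq]
      rw [this]
      exact isSmallSub_map_mkQ D hAsmall
end
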